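/- arXiv:2504.00801 — 3 statements merged into one kernel-verified Lean document; each statement's English description precedes it below -/
import Mathlib

section
/- Let $a<b$, let $h:[a,b]\to\mathbb{R}$ be three times continuously differentiable, attaining its maximum over $[a,b]$ only at a point $c$ with $a<c<b$ and satisfying $h''(c)\neq 0$, and let $g:[a,b]\to\mathbb{R}$ be continuously differentiable with $g(c)\neq 0$. Then $\int_a^b e^{t h(x)} g(x)\,dx \sim \sqrt{\tfrac{2\pi}{|h''(c)|}}\, g(c)\, \tfrac{e^{t h(c)}}{\sqrt{t}}$ as $t\to\infty$, i.e., the quotient of $\int_a^b e^{t h(x)} g(x)\,dx$ by $\sqrt{2\pi/|h''(c)|}\, g(c)\, e^{t h(c)} t^{-1/2}$ tends to $1$ as $t\to\infty$. -/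
open Real MeasureTheory Set Filter
open Topology intervalIntegral

lemma my_sqrt_atTop : Tendsto Real.sqrt atTop atTop := by
  apply tendsto_atTop_atTop.2
  intro b
  exact ⟨b ^ 2, fun x hx => by
    rcases le_or_gt b 0 with hb | hb
    · exact hb.trans (Real.sqrt_nonneg x)
    · exact Real.le_sqrt_of_sq_le hx⟩

lemma my_tail_decay {k : ℝ} (hk : 0 < k) :
    Tendsto (fun t : ℝ => Real.sqrt t * Real.exp (-(k * t))) atTop (𝓝 0) := by
  have h1 : Tendsto (fun s : ℝ => s * Real.exp (-s)) atTop (𝓝 0) := by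
    simpa using tendsto_pow_mul_exp_neg_atTop_nhds_zero 1
  have h2 : Tendsto (fun t : ℝ => (k * t) * Real.exp (-(k * t))) atTop (𝓝 0) :=
    h1.comp (tendsto_id.const_mul_atTop hk)
  have h3 : Tendsto (fun t : ℝ => t * Real.exp (-(k * t))) atTop (𝓝 0) := by
    have := h2.const_mul (1 / k)
    simp only [mul_zero] at this
    refine this.congr (fun t => ?_)
    field_simp
  refine tendsto_of_tendsto_of_tendsto_of_le_of_le' tendsto_const_nhds h3 ?_ ?_
  · filter_upwards [eventually_ge_atTop (0 : ℝ)] with t ht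
    positivity
  · filter_upwards [eventually_ge_atTop (1 : ℝ)] with t ht
    have h4 : Real.sqrt t ≤ t := by
      nlinarith [Real.sq_sqrt (show (0:ℝ) ≤ t by linarith), Real.sqrt_nonneg t]
    exact mul_le_mul_of_nonneg_right h4 (Real.exp_nonneg _)

lemma my_gauss_lim {B δ : ℝ} (cc : ℝ) (hB : 0 < B) (hδ : 0 < δ) :
    Tendsto (fun t : ℝ => Real.sqrt t *
        ∫ x in (cc - δ)..(cc + δ), Real.exp (-(t * B / 2) * (x - cc) ^ 2)) atTop
      (𝓝 (Real.sqrt (2 * π / B))) := by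
  have hint : Integrable (fun v : ℝ => Real.exp (-(B / 2) * v ^ 2)) :=
    integrable_exp_neg_mul_sq (by positivity)
  have hend : Tendsto (fun t : ℝ => Real.sqrt t * δ) atTop atTop :=
    my_sqrt_atTop.atTop_mul_const hδ
  have hlim : Tendsto (fun t : ℝ =>
      ∫ v in (-(Real.sqrt t * δ))..(Real.sqrt t * δ), Real.exp (-(B / 2) * v ^ 2)) atTop
      (𝓝 (∫ v : ℝ, Real.exp (-(B / 2) * v ^ 2))) :=
    MeasureTheory.intervalIntegral_tendsto_integral hint (tendsto_neg_atBot_iff.2 hend) hend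
  have hval : (∫ v : ℝ, Real.exp (-(B / 2) * v ^ 2)) = Real.sqrt (2 * π / B) := by
    rw [integral_gaussian]
    congr 1
    field_simp
  rw [hval] at hlim
  refine hlim.congr' ?_
  filter_upwards [eventually_gt_atTop (0 : ℝ)] with t ht
  have hst : (0 : ℝ) < Real.sqrt t := Real.sqrt_pos.2 ht
  have h1 : (∫ x in (cc - δ)..(cc + δ), Real.exp (-(t * B / 2) * (x - cc) ^ 2))
      = ∫ u in (-δ)..δ, Real.exp (-(t * B / 2) * u ^ 2) := by
    have := intervalIntegral.integral_comp_sub_right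
      (fun u => Real.exp (-(t * B / 2) * u ^ 2)) cc (a := cc - δ) (b := cc + δ)
    simpa using this
  have h2 : (∫ u in (-δ)..δ, Real.exp (-(t * B / 2) * u ^ 2))
      = (Real.sqrt t)⁻¹ * ∫ v in (Real.sqrt t * (-δ))..(Real.sqrt t * δ),
          Real.exp (-(B / 2) * v ^ 2) := by
    have hc := intervalIntegral.integral_comp_mul_left
      (fun v => Real.exp (-(B / 2) * v ^ 2)) (hst.ne') (a := -δ) (b := δ)
    have ht2 : Real.sqrt t ^ 2 = t := Real.sq_sqrt ht.le
    have h0 : (fun u : ℝ => Real.exp (-(t * B / 2) * u ^ 2))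
        = fun u : ℝ => Real.exp (-(B / 2) * (Real.sqrt t * u) ^ 2) := by
      funext u
      congr 1
      linear_combination (B / 2 * u ^ 2) * ht2
    rw [h0]
    simpa [smul_eq_mul] using hc
  rw [h1, h2, show Real.sqrt t * (-δ) = -(Real.sqrt t * δ) by ring]
  field_simp

lemma my_iter_eq {a b c : ℝ} (h : ℝ → ℝ) (hac : a < c) (hcb : c < b) :
    iteratedDerivWithin 2 h (Set.Icc a b) c = deriv (deriv h) c := by
  have hmem : Set.Icc a b ∈ 𝓝 c := Icc_mem_nhds hac hcb
  have h2 : iteratedDeriv 2 h = deriv (deriv h) := by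
    rw [show (2 : ℕ) = 1 + 1 from rfl, iteratedDeriv_succ, iteratedDeriv_one]
  rw [iteratedDerivWithin_eq_iteratedFDerivWithin, ← Set.univ_inter (Set.Icc a b),
    iteratedFDerivWithin_inter hmem, ← iteratedDerivWithin_eq_iteratedFDerivWithin,
    iteratedDerivWithin_univ, h2]

lemma my_quad_lim {a b c : ℝ} {h : ℝ → ℝ} (hac : a < c) (hcb : c < b)
    (hh : ContDiffOn ℝ 3 h (Set.Icc a b))
    (hd0 : deriv h c = 0) :
    Tendsto (fun x => (h x - h c) / (x - c) ^ 2) (𝓝[≠] c) (𝓝 (deriv (deriv h) c / 2)) := by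
  have hcI : c ∈ Set.Ioo a b := ⟨hac, hcb⟩
  have hIoo : ContDiffOn ℝ 3 h (Set.Ioo a b) := hh.mono Set.Ioo_subset_Icc_self
  have hopen : IsOpen (Set.Ioo a b) := isOpen_Ioo
  have hd1 : ∀ x ∈ Set.Ioo a b, HasDerivAt h (deriv h x) x := fun x hx =>
    (((hIoo x hx).contDiffAt (hopen.mem_nhds hx)).differentiableAt (by norm_num)).hasDerivAt
  have hC2 : ContDiffOn ℝ 2 (deriv h) (Set.Ioo a b) :=
    hIoo.deriv_of_isOpen hopen (by norm_num)
  have hd2 : HasDerivAt (deriv h) (deriv (deriv h) c) c :=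
    (((hC2 c hcI).contDiffAt (hopen.mem_nhds hcI)).differentiableAt (by norm_num)).hasDerivAt
  have hIoo_nhds : Set.Ioo a b ∈ 𝓝 c := hopen.mem_nhds hcI
  have hIoo_nhds' : Set.Ioo a b ∈ 𝓝[≠] c := mem_nhdsWithin_of_mem_nhds hIoo_nhds
  apply HasDerivAt.lhopital_zero_nhdsNE (f' := fun x => deriv h x) (g' := fun x => 2 * (x - c))
  · filter_upwards [hIoo_nhds'] with x hx
    exact (hd1 x hx).sub_const _
  · filter_upwards [] with x
    have := ((hasDerivAt_id x).sub_const c).fun_pow 2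
    simpa using this
  · filter_upwards [self_mem_nhdsWithin] with x hx
    have : x - c ≠ 0 := sub_ne_zero.2 hx
    positivity
  · have hcont : ContinuousAt h c :=
      ((hIoo c hcI).contDiffAt (hopen.mem_nhds hcI)).continuousAt
    have h0 : Tendsto (fun x => h x - h c) (𝓝 c) (𝓝 (h c - h c)) :=
      hcont.tendsto.sub tendsto_const_nhds
    simp only [sub_self] at h0
    exact h0.mono_left nhdsWithin_le_nhds
  · have : ContinuousAt (fun x : ℝ => (x - c) ^ 2) c := by fun_prop
    have := this.tendsto
    simp only [sub_self, ne_eq, OfNat.ofNat_ne_zero, not_false_eq_true, zero_pow] at this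
    exact this.mono_left nhdsWithin_le_nhds
  · have hslope := hasDerivAt_iff_tendsto_slope.1 hd2
    have := hslope.div_const 2
    refine this.congr' ?_
    filter_upwards [self_mem_nhdsWithin] with x hx
    have hxc : x - c ≠ 0 := sub_ne_zero.2 hx
    rw [slope_def_field, hd0, sub_zero, div_div, mul_comm]

lemma laplace_core (a b c : ℝ) (hab : a < b) (hac : a < c) (hcb : c < b)
    (h g : ℝ → ℝ) (hh : ContDiffOn ℝ 3 h (Set.Icc a b))
    (hmax : ∀ x ∈ Set.Icc a b, x ≠ c → h x < h c)
    (hh2 : iteratedDerivWithin 2 h (Set.Icc a b) c ≠ 0)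
    (hg : ContDiffOn ℝ 1 g (Set.Icc a b)) (hgc : 0 < g c) :
    Tendsto (fun t : ℝ => Real.sqrt t * Real.exp (-(t * h c)) *
        ∫ x in a..b, Real.exp (t * h x) * g x) atTop
      (𝓝 (Real.sqrt (2 * π / |iteratedDerivWithin 2 h (Set.Icc a b) c|) * g c)) := by
  have hcI : c ∈ Set.Ioo a b := ⟨hac, hcb⟩
  have hcK : c ∈ Set.Icc a b := Set.Ioo_subset_Icc_self hcI
  have hKnhds : Set.Icc a b ∈ 𝓝 c := Icc_mem_nhds hac hcb
  have hIoo_nhds : Set.Ioo a b ∈ 𝓝 c := isOpen_Ioo.mem_nhds hcI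
  -- first derivative vanishes
  have hloc : IsLocalMax h c := by
    filter_upwards [hKnhds] with x hx
    by_cases hxc : x = c
    · subst hxc; exact le_refl _
    · exact (hmax x hx hxc).le
  have hd0 : deriv h c = 0 := hloc.deriv_eq_zero
  set A : ℝ := -(deriv (deriv h) c) with hA_def
  have hEq : iteratedDerivWithin 2 h (Set.Icc a b) c = deriv (deriv h) c :=
    my_iter_eq h hac hcb
  have hq := my_quad_lim hac hcb hh hd0
  have hAne : deriv (deriv h) c ≠ 0 := hEq ▸ hh2
  have hdd_le : deriv (deriv h) c ≤ 0 := by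
    have hev : ∀ᶠ x in 𝓝[≠] c, (h x - h c) / (x - c) ^ 2 ≤ 0 := by
      filter_upwards [mem_nhdsWithin_of_mem_nhds hKnhds, self_mem_nhdsWithin] with x hx1 hx2
      exact div_nonpos_of_nonpos_of_nonneg (sub_nonpos.2 (hmax x hx1 hx2).le) (sq_nonneg _)
    have := le_of_tendsto hq hev
    linarith
  have hApos : 0 < A := by
    rcases lt_or_eq_of_le hdd_le with h' | h'
    · have : (0:ℝ) < -(deriv (deriv h) c) := by linarith
      exact this
    · exact absurd h' hAne
  have habs : |iteratedDerivWithin 2 h (Set.Icc a b) c| = A := by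
    rw [hEq]
    exact abs_of_neg (by linarith)
  rw [habs]
  -- continuity and bounds
  have hhc : ContinuousOn h (Set.Icc a b) := hh.continuousOn
  have hgcont : ContinuousOn g (Set.Icc a b) := hg.continuousOn
  obtain ⟨Mg, hMg⟩ := isCompact_Icc.exists_bound_of_continuousOn hgcont
  have hMg0 : 0 ≤ Mg := le_trans (norm_nonneg _) (hMg c hcK)
  have hIcont : ∀ t : ℝ, ContinuousOn (fun x => Real.exp (t * h x) * g x) (Set.Icc a b) :=
    fun t => (Real.continuous_exp.comp_continuousOn (continuousOn_const.mul hhc)).mul hgcont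
  -- the key two-sided bound
  have key : ∀ ε : ℝ, 0 < ε → ε < A → ε < g c →
      ∃ lo hi : ℝ → ℝ,
        Tendsto lo atTop (𝓝 ((g c - ε) * Real.sqrt (2 * π / (A + ε)))) ∧
        Tendsto hi atTop (𝓝 ((g c + ε) * Real.sqrt (2 * π / (A - ε)))) ∧
        ∀ᶠ t in atTop,
          lo t ≤ Real.sqrt t * Real.exp (-(t * h c)) *
              ∫ x in a..b, Real.exp (t * h x) * g x ∧
          Real.sqrt t * Real.exp (-(t * h c)) *
              (∫ x in a..b, Real.exp (t * h x) * g x) ≤ hi t := by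
    intro ε hε hεA hεg
    -- quadratic bounds near c
    have e2 : ∀ᶠ x in 𝓝 c, |g x - g c| ≤ ε := by
      have hgc_at : ContinuousAt g c := (hgcont c hcK).continuousAt hKnhds
      have := Metric.tendsto_nhds.1 hgc_at.tendsto ε hε
      filter_upwards [this] with x hx
      rw [Real.dist_eq] at hx
      exact hx.le
    have e3 : ∀ᶠ x in 𝓝 c, x ≠ c →
        |(h x - h c) / (x - c) ^ 2 - deriv (deriv h) c / 2| < ε / 2 := by
      have := Metric.tendsto_nhds.1 hq (ε / 2) (by positivity)
      rw [eventually_nhdsWithin_iff] at this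
      filter_upwards [this] with x hx hxc
      have := hx hxc
      rwa [Real.dist_eq] at this
    have hev : ∀ᶠ x in 𝓝 c, x ∈ Set.Ioo a b ∧ |g x - g c| ≤ ε ∧
        (-(A + ε) / 2 * (x - c) ^ 2 ≤ h x - h c ∧
          h x - h c ≤ -(A - ε) / 2 * (x - c) ^ 2) := by
      filter_upwards [hIoo_nhds, e2, e3] with x h1 h2 h3
      refine ⟨h1, h2, ?_⟩
      by_cases hxc : x = c
      · subst hxc; simp
      · have h3' := h3 hxc
        have hne : x - c ≠ 0 := sub_ne_zero.2 hxc
        have hsq : (0 : ℝ) < (x - c) ^ 2 := by positivity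
        have hdd : deriv (deriv h) c = -A := by simp [hA_def]
        rw [hdd] at h3'
        have habs' := abs_lt.1 h3'
        have hlow : -(A + ε) / 2 ≤ (h x - h c) / (x - c) ^ 2 := by
          have := habs'.1; linarith
        have hup : (h x - h c) / (x - c) ^ 2 ≤ -(A - ε) / 2 := by
          have := habs'.2; linarith
        constructor
        · calc -(A + ε) / 2 * (x - c) ^ 2
              ≤ (h x - h c) / (x - c) ^ 2 * (x - c) ^ 2 :=
                mul_le_mul_of_nonneg_right hlow hsq.le
            _ = h x - h c := div_mul_cancel₀ _ (by positivity)
        · calc h x - h c = (h x - h c) / (x - c) ^ 2 * (x - c) ^ 2 :=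
                (div_mul_cancel₀ _ (by positivity)).symm
            _ ≤ -(A - ε) / 2 * (x - c) ^ 2 := mul_le_mul_of_nonneg_right hup hsq.le
    obtain ⟨δ₀, hδ₀, hball⟩ := Metric.eventually_nhds_iff.1 hev
    set δ : ℝ := δ₀ / 2 with hδ_def
    have hδpos : 0 < δ := by positivity
    have hP : ∀ x ∈ Set.Icc (c - δ) (c + δ), x ∈ Set.Ioo a b ∧ |g x - g c| ≤ ε ∧
        (-(A + ε) / 2 * (x - c) ^ 2 ≤ h x - h c ∧
          h x - h c ≤ -(A - ε) / 2 * (x - c) ^ 2) := by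
      intro x hx
      apply hball
      rw [Real.dist_eq, abs_lt]
      constructor <;> [linarith [hx.1]; linarith [hx.2]]
    have hlo_mem : c - δ ∈ Set.Ioo a b :=
      (hP (c - δ) ⟨le_refl _, by linarith⟩).1
    have hhi_mem : c + δ ∈ Set.Ioo a b :=
      (hP (c + δ) ⟨by linarith, le_refl _⟩).1
    have ha_lt : a < c - δ := hlo_mem.1
    have hb_gt : c + δ < b := hhi_mem.2
    -- tail maxima
    have hne1 : (Set.Icc a (c - δ)).Nonempty := ⟨a, ⟨le_refl a, by linarith⟩⟩
    have hne2 : (Set.Icc (c + δ) b).Nonempty := ⟨b, ⟨by linarith, le_refl b⟩⟩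
    obtain ⟨x₁, hx₁mem, hx₁max⟩ := isCompact_Icc.exists_isMaxOn
      hne1 (hhc.mono (Set.Icc_subset_Icc le_rfl (by linarith)))
    obtain ⟨x₂, hx₂mem, hx₂max⟩ := isCompact_Icc.exists_isMaxOn
      hne2 (hhc.mono (Set.Icc_subset_Icc (by linarith) le_rfl))
    have hx₁lt : h x₁ < h c := by
      apply hmax x₁ ⟨hx₁mem.1, hx₁mem.2.trans (by linarith)⟩
      intro e; rw [e] at hx₁mem; linarith [hx₁mem.2]
    have hx₂lt : h x₂ < h c := by
      apply hmax x₂ ⟨le_trans (by linarith) hx₂mem.1, hx₂mem.2⟩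
      intro e; rw [e] at hx₂mem; linarith [hx₂mem.1]
    set η : ℝ := max (h x₁) (h x₂) with hη_def
    have hηlt : η < h c := max_lt hx₁lt hx₂lt
    have htail_le1 : ∀ x ∈ Set.Icc a (c - δ), h x ≤ η :=
      fun x hx => (hx₁max hx).trans (le_max_left _ _)
    have htail_le2 : ∀ x ∈ Set.Icc (c + δ) b, h x ≤ η :=
      fun x hx => (hx₂max hx).trans (le_max_right _ _)
    -- integrability
    have hInt : ∀ t : ℝ, ∀ u v : ℝ, u ∈ Set.Icc a b → v ∈ Set.Icc a b →
        IntervalIntegrable (fun x => Real.exp (t * h x) * g x) volume u v := by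
      intro t u v hu hv
      exact ((hIcont t).mono (Set.uIcc_subset_Icc hu hv)).intervalIntegrable
    have hmem1 : c - δ ∈ Set.Icc a b := Set.Ioo_subset_Icc_self hlo_mem
    have hmem2 : c + δ ∈ Set.Icc a b := Set.Ioo_subset_Icc_self hhi_mem
    have hamem : a ∈ Set.Icc a b := ⟨le_refl a, hab.le⟩
    have hbmem : b ∈ Set.Icc a b := ⟨hab.le, le_refl b⟩
    -- Gaussian comparison integrals are integrable
    have hGint : ∀ B t : ℝ, IntervalIntegrable
        (fun x => Real.exp (-(t * B / 2) * (x - c) ^ 2)) volume (c - δ) (c + δ) := by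
      intro B t
      exact (Real.continuous_exp.comp
        ((continuous_const.mul ((continuous_id.sub continuous_const).pow 2)))).intervalIntegrable _ _
    refine ⟨fun t => (g c - ε) * (Real.sqrt t *
        ∫ x in (c - δ)..(c + δ), Real.exp (-(t * (A + ε) / 2) * (x - c) ^ 2)) -
        2 * ((Mg * (b - a)) * (Real.sqrt t * Real.exp (-((h c - η) * t)))),
      fun t => (g c + ε) * (Real.sqrt t *
        ∫ x in (c - δ)..(c + δ), Real.exp (-(t * (A - ε) / 2) * (x - c) ^ 2)) +
        2 * ((Mg * (b - a)) * (Real.sqrt t * Real.exp (-((h c - η) * t)))), ?_, ?_, ?_⟩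
    · have hg1 := (my_gauss_lim c (by linarith : (0:ℝ) < A + ε) hδpos).const_mul (g c - ε)
      have hg2 := ((my_tail_decay (by linarith : (0:ℝ) < h c - η)).const_mul
        (Mg * (b - a))).const_mul 2
      have := hg1.sub hg2
      simpa using this
    · have hg1 := (my_gauss_lim c (by linarith : (0:ℝ) < A - ε) hδpos).const_mul (g c + ε)
      have hg2 := ((my_tail_decay (by linarith : (0:ℝ) < h c - η)).const_mul
        (Mg * (b - a))).const_mul 2
      have := hg1.add hg2
      simpa using this
    · filter_upwards [eventually_ge_atTop (0 : ℝ)] with t ht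
      -- split the integral
      have hsplit : (∫ x in a..b, Real.exp (t * h x) * g x) =
          (∫ x in a..(c - δ), Real.exp (t * h x) * g x) +
          (∫ x in (c - δ)..(c + δ), Real.exp (t * h x) * g x) +
          (∫ x in (c + δ)..b, Real.exp (t * h x) * g x) := by
        rw [intervalIntegral.integral_add_adjacent_intervals
            (hInt t a (c - δ) hamem hmem1) (hInt t (c - δ) (c + δ) hmem1 hmem2),
          intervalIntegral.integral_add_adjacent_intervals
            (hInt t a (c + δ) hamem hmem2) (hInt t (c + δ) b hmem2 hbmem)]
      -- tail bounds
      have htail : ∀ u v : ℝ, u ∈ Set.Icc a b → v ∈ Set.Icc a b → u ≤ v →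
          (∀ x ∈ Set.Icc u v, h x ≤ η) →
          |∫ x in u..v, Real.exp (t * h x) * g x| ≤ Mg * (b - a) * Real.exp (t * η) := by
        intro u v hu hv huv hle
        have hb1 : ∀ x ∈ Set.uIoc u v, ‖Real.exp (t * h x) * g x‖ ≤ Mg * Real.exp (t * η) := by
          intro x hx
          rw [Set.uIoc_of_le huv] at hx
          have hxuv : x ∈ Set.Icc u v := ⟨hx.1.le, hx.2⟩
          have hxab : x ∈ Set.Icc a b := ⟨hu.1.trans hxuv.1, hxuv.2.trans hv.2⟩
          rw [norm_mul, Real.norm_eq_abs, Real.abs_exp]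
          calc Real.exp (t * h x) * ‖g x‖
              ≤ Real.exp (t * η) * Mg := by
                apply mul_le_mul _ (hMg x hxab) (norm_nonneg _) (Real.exp_nonneg _)
                exact Real.exp_le_exp.2 (mul_le_mul_of_nonneg_left (hle x hxuv) ht)
            _ = Mg * Real.exp (t * η) := by ring
        have := intervalIntegral.norm_integral_le_of_norm_le_const hb1
        rw [Real.norm_eq_abs] at this
        calc |∫ x in u..v, Real.exp (t * h x) * g x|
            ≤ Mg * Real.exp (t * η) * |v - u| := this
          _ ≤ Mg * Real.exp (t * η) * (b - a) := by
              apply mul_le_mul_of_nonneg_left _ (by positivity)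
              rw [abs_of_nonneg (by linarith)]
              linarith [hu.1, hv.2]
          _ = Mg * (b - a) * Real.exp (t * η) := by ring
      have htail1 := htail a (c - δ) hamem hmem1 (by linarith)
        (fun x hx => htail_le1 x hx)
      have htail2 := htail (c + δ) b hmem2 hbmem (by linarith)
        (fun x hx => htail_le2 x hx)
      -- central bounds
      have hcen_lo : (g c - ε) * Real.exp (t * h c) *
          (∫ x in (c - δ)..(c + δ), Real.exp (-(t * (A + ε) / 2) * (x - c) ^ 2)) ≤
          ∫ x in (c - δ)..(c + δ), Real.exp (t * h x) * g x := by
        rw [← intervalIntegral.integral_const_mul]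
        apply intervalIntegral.integral_mono_on (by linarith)
          (((hGint (A + ε) t).const_mul _)) (hInt t _ _ hmem1 hmem2)
        intro x hx
        obtain ⟨hxI, hgx, hlow, hup⟩ := hP x hx
        have hgx' : g c - ε ≤ g x := by
          have := abs_le.1 hgx; linarith [this.1]
        have he1 : Real.exp (t * h c) * Real.exp (-(t * (A + ε) / 2) * (x - c) ^ 2) ≤
            Real.exp (t * h x) := by
          rw [← Real.exp_add]
          apply Real.exp_le_exp.2
          have h2' := mul_le_mul_of_nonneg_left hlow ht
          calc t * h c + -(t * (A + ε) / 2) * (x - c) ^ 2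
              = t * h c + t * (-(A + ε) / 2 * (x - c) ^ 2) := by ring
            _ ≤ t * h c + t * (h x - h c) := by linarith
            _ = t * h x := by ring
        calc (g c - ε) * Real.exp (t * h c) * Real.exp (-(t * (A + ε) / 2) * (x - c) ^ 2)
            = (g c - ε) * (Real.exp (t * h c) * Real.exp (-(t * (A + ε) / 2) * (x - c) ^ 2)) := by
              ring
          _ ≤ (g c - ε) * Real.exp (t * h x) :=
              mul_le_mul_of_nonneg_left he1 (by linarith)
          _ = Real.exp (t * h x) * (g c - ε) := by ring
          _ ≤ Real.exp (t * h x) * g x :=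
              mul_le_mul_of_nonneg_left hgx' (Real.exp_nonneg _)
      have hcen_hi : (∫ x in (c - δ)..(c + δ), Real.exp (t * h x) * g x) ≤
          (g c + ε) * Real.exp (t * h c) *
          (∫ x in (c - δ)..(c + δ), Real.exp (-(t * (A - ε) / 2) * (x - c) ^ 2)) := by
        rw [← intervalIntegral.integral_const_mul]
        apply intervalIntegral.integral_mono_on (by linarith)
          (hInt t _ _ hmem1 hmem2) (((hGint (A - ε) t).const_mul _))
        intro x hx
        obtain ⟨hxI, hgx, hlow, hup⟩ := hP x hx
        have hgx' : g x ≤ g c + ε := by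
          have := abs_le.1 hgx; linarith [this.2]
        have he1 : Real.exp (t * h x) ≤
            Real.exp (t * h c) * Real.exp (-(t * (A - ε) / 2) * (x - c) ^ 2) := by
          rw [← Real.exp_add]
          apply Real.exp_le_exp.2
          have h2' := mul_le_mul_of_nonneg_left hup ht
          calc t * h x = t * h c + t * (h x - h c) := by ring
            _ ≤ t * h c + t * (-(A - ε) / 2 * (x - c) ^ 2) := by linarith
            _ = t * h c + -(t * (A - ε) / 2) * (x - c) ^ 2 := by ring
        calc Real.exp (t * h x) * g x
            ≤ Real.exp (t * h x) * (g c + ε) :=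
              mul_le_mul_of_nonneg_left hgx' (Real.exp_nonneg _)
          _ ≤ (Real.exp (t * h c) * Real.exp (-(t * (A - ε) / 2) * (x - c) ^ 2)) * (g c + ε) :=
              mul_le_mul_of_nonneg_right he1 (by linarith)
          _ = (g c + ε) * Real.exp (t * h c) *
              Real.exp (-(t * (A - ε) / 2) * (x - c) ^ 2) := by ring
      -- assemble
      set I1 := ∫ x in a..(c - δ), Real.exp (t * h x) * g x with hI1
      set I2 := ∫ x in (c - δ)..(c + δ), Real.exp (t * h x) * g x with hI2
      set I3 := ∫ x in (c + δ)..b, Real.exp (t * h x) * g x with hI3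
      set Jp := ∫ x in (c - δ)..(c + δ), Real.exp (-(t * (A + ε) / 2) * (x - c) ^ 2) with hJp
      set Jm := ∫ x in (c - δ)..(c + δ), Real.exp (-(t * (A - ε) / 2) * (x - c) ^ 2) with hJm
      have hsE : (0:ℝ) ≤ Real.sqrt t * Real.exp (-(t * h c)) := by positivity
      have hEe : Real.exp (-(t * h c)) * Real.exp (t * h c) = 1 := by
        rw [← Real.exp_add]; simp
      have hEη : Real.exp (-(t * h c)) * Real.exp (t * η) = Real.exp (-((h c - η) * t)) := by
        rw [← Real.exp_add]; ring_nf
      have hI1lo : -(Mg * (b - a) * Real.exp (t * η)) ≤ I1 := by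
        have := neg_abs_le I1; linarith [htail1]
      have hI1hi : I1 ≤ Mg * (b - a) * Real.exp (t * η) := by
        have := le_abs_self I1; linarith [htail1]
      have hI3lo : -(Mg * (b - a) * Real.exp (t * η)) ≤ I3 := by
        have := neg_abs_le I3; linarith [htail2]
      have hI3hi : I3 ≤ Mg * (b - a) * Real.exp (t * η) := by
        have := le_abs_self I3; linarith [htail2]
      rw [hsplit]
      constructor
      · have hXle : (g c - ε) * Real.exp (t * h c) * Jp -
            2 * (Mg * (b - a) * Real.exp (t * η)) ≤ I1 + I2 + I3 := by
          linarith [hcen_lo]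
        have hmul := mul_le_mul_of_nonneg_left hXle hsE
        have heq : Real.sqrt t * Real.exp (-(t * h c)) *
            ((g c - ε) * Real.exp (t * h c) * Jp - 2 * (Mg * (b - a) * Real.exp (t * η))) =
            (g c - ε) * (Real.sqrt t * Jp) -
            2 * ((Mg * (b - a)) * (Real.sqrt t * Real.exp (-((h c - η) * t)))) := by
          linear_combination (Real.sqrt t * (g c - ε) * Jp) * hEe -
            (2 * (Mg * (b - a)) * Real.sqrt t) * hEη
        calc (g c - ε) * (Real.sqrt t * Jp) -
              2 * ((Mg * (b - a)) * (Real.sqrt t * Real.exp (-((h c - η) * t))))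
            = Real.sqrt t * Real.exp (-(t * h c)) *
              ((g c - ε) * Real.exp (t * h c) * Jp -
                2 * (Mg * (b - a) * Real.exp (t * η))) := heq.symm
          _ ≤ Real.sqrt t * Real.exp (-(t * h c)) * (I1 + I2 + I3) := hmul
      · have hXge : I1 + I2 + I3 ≤ (g c + ε) * Real.exp (t * h c) * Jm +
            2 * (Mg * (b - a) * Real.exp (t * η)) := by
          linarith [hcen_hi]
        have hmul := mul_le_mul_of_nonneg_left hXge hsE
        have heq : Real.sqrt t * Real.exp (-(t * h c)) *
            ((g c + ε) * Real.exp (t * h c) * Jm + 2 * (Mg * (b - a) * Real.exp (t * η))) =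
            (g c + ε) * (Real.sqrt t * Jm) +
            2 * ((Mg * (b - a)) * (Real.sqrt t * Real.exp (-((h c - η) * t)))) := by
          linear_combination (Real.sqrt t * (g c + ε) * Jm) * hEe +
            (2 * (Mg * (b - a)) * Real.sqrt t) * hEη
        calc Real.sqrt t * Real.exp (-(t * h c)) * (I1 + I2 + I3)
            ≤ Real.sqrt t * Real.exp (-(t * h c)) *
              ((g c + ε) * Real.exp (t * h c) * Jm +
                2 * (Mg * (b - a) * Real.exp (t * η))) := hmul
          _ = (g c + ε) * (Real.sqrt t * Jm) +
              2 * ((Mg * (b - a)) * (Real.sqrt t * Real.exp (-((h c - η) * t)))) := heq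
  -- conclude by squeezing
  refine tendsto_order.2 ⟨?_, ?_⟩
  · intro l hl
    have hFcont : ContinuousAt (fun ε : ℝ => (g c - ε) * Real.sqrt (2 * π / (A + ε))) 0 := by
      apply ContinuousAt.mul
      · exact continuousAt_const.sub continuousAt_id
      · exact Real.continuous_sqrt.continuousAt.comp
          (ContinuousAt.div continuousAt_const (continuousAt_const.add continuousAt_id)
            (by simpa using hApos.ne'))
    have hF : Tendsto (fun ε : ℝ => (g c - ε) * Real.sqrt (2 * π / (A + ε))) (𝓝[>] 0)
        (𝓝 (Real.sqrt (2 * π / A) * g c)) := by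
      have := hFcont.tendsto.mono_left (nhdsWithin_le_nhds : 𝓝[>] (0:ℝ) ≤ 𝓝 0)
      simpa [mul_comm] using this
    have hev1 := hF.eventually (eventually_gt_nhds hl)
    have hsmall : ∀ᶠ ε in 𝓝[>] (0:ℝ), ε < A ∧ ε < g c := by
      have h1 : ∀ᶠ ε in 𝓝 (0:ℝ), ε < A := eventually_lt_nhds hApos
      have h2 : ∀ᶠ ε in 𝓝 (0:ℝ), ε < g c := eventually_lt_nhds hgc
      exact ((h1.and h2).filter_mono nhdsWithin_le_nhds)
    obtain ⟨ε, ⟨hlF, hεA, hεg⟩, hε0⟩ :=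
      ((hev1.and hsmall).and self_mem_nhdsWithin).exists
    obtain ⟨lo, hi, hlo, _, hbound⟩ := key ε hε0 hεA hεg
    filter_upwards [hlo.eventually (eventually_gt_nhds hlF), hbound] with t h1 h2
    exact lt_of_lt_of_le h1 h2.1
  · intro u hu
    have hFcont : ContinuousAt (fun ε : ℝ => (g c + ε) * Real.sqrt (2 * π / (A - ε))) 0 := by
      apply ContinuousAt.mul
      · exact continuousAt_const.add continuousAt_id
      · exact Real.continuous_sqrt.continuousAt.comp
          (ContinuousAt.div continuousAt_const (continuousAt_const.sub continuousAt_id)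
            (by simpa using hApos.ne'))
    have hF : Tendsto (fun ε : ℝ => (g c + ε) * Real.sqrt (2 * π / (A - ε))) (𝓝[>] 0)
        (𝓝 (Real.sqrt (2 * π / A) * g c)) := by
      have := hFcont.tendsto.mono_left (nhdsWithin_le_nhds : 𝓝[>] (0:ℝ) ≤ 𝓝 0)
      simpa [mul_comm] using this
    have hev1 := hF.eventually (eventually_lt_nhds hu)
    have hsmall : ∀ᶠ ε in 𝓝[>] (0:ℝ), ε < A ∧ ε < g c := by
      have h1 : ∀ᶠ ε in 𝓝 (0:ℝ), ε < A := eventually_lt_nhds hApos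
      have h2 : ∀ᶠ ε in 𝓝 (0:ℝ), ε < g c := eventually_lt_nhds hgc
      exact ((h1.and h2).filter_mono nhdsWithin_le_nhds)
    obtain ⟨ε, ⟨huF, hεA, hεg⟩, hε0⟩ :=
      ((hev1.and hsmall).and self_mem_nhdsWithin).exists
    obtain ⟨lo, hi, _, hhi, hbound⟩ := key ε hε0 hεA hεg
    filter_upwards [hhi.eventually (eventually_lt_nhds huF), hbound] with t h1 h2
    exact lt_of_le_of_lt h2.2 h1

lemma laplace_final (a b c : ℝ) (hab : a < b) (hac : a < c) (hcb : c < b)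
    (h g : ℝ → ℝ) (hh : ContDiffOn ℝ 3 h (Set.Icc a b))
    (hmax : ∀ x ∈ Set.Icc a b, x ≠ c → h x < h c)
    (hh2 : iteratedDerivWithin 2 h (Set.Icc a b) c ≠ 0)
    (hg : ContDiffOn ℝ 1 g (Set.Icc a b)) (hgc : 0 < g c) :
    Filter.Tendsto
      (fun t : ℝ => (∫ x in a..b, Real.exp (t * h x) * g x) /
        (Real.sqrt (2 * π / |iteratedDerivWithin 2 h (Set.Icc a b) c|) * g c *
          (Real.exp (t * h c) / Real.sqrt t)))
      Filter.atTop (nhds 1) := by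
  set C := Real.sqrt (2 * π / |iteratedDerivWithin 2 h (Set.Icc a b) c|) * g c with hC
  have habs_pos : 0 < |iteratedDerivWithin 2 h (Set.Icc a b) c| := abs_pos.2 hh2
  have hπ : 0 < 2 * π := by positivity
  have hCpos : 0 < C := mul_pos (Real.sqrt_pos.2 (div_pos hπ habs_pos)) hgc
  have hcore := laplace_core a b c hab hac hcb h g hh hmax hh2 hg hgc
  have hdiv := hcore.div_const C
  rw [← hC, div_self hCpos.ne'] at hdiv
  refine hdiv.congr' ?_
  filter_upwards [eventually_gt_atTop (0 : ℝ)] with t ht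
  have hst : 0 < Real.sqrt t := Real.sqrt_pos.2 ht
  have hE : 0 < Real.exp (t * h c) := Real.exp_pos _
  rw [Real.exp_neg]
  field_simp

/-- Classical Laplace's method, interior maximum:
`∫ e^{th} g ∼ √(2π/|h''(c)|) g(c) e^{th(c)} / √t` as `t → ∞`. -/
theorem laplace_interior_classical
    (a b c : ℝ) (hab : a < b) (hac : a < c) (hcb : c < b)
    (h g : ℝ → ℝ)
    (hh : ContDiffOn ℝ 3 h (Set.Icc a b))
    (hmax : ∀ x ∈ Set.Icc a b, x ≠ c → h x < h c)
    (hh2 : iteratedDerivWithin 2 h (Set.Icc a b) c ≠ 0)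
    (hg : ContDiffOn ℝ 1 g (Set.Icc a b))
    (hgc : g c ≠ 0) :
    Filter.Tendsto
      (fun t : ℝ => (∫ x in a..b, Real.exp (t * h x) * g x) /
        (Real.sqrt (2 * π / |iteratedDerivWithin 2 h (Set.Icc a b) c|) * g c *
          (Real.exp (t * h c) / Real.sqrt t)))
      Filter.atTop (nhds 1) := by
  rcases hgc.lt_or_gt with hneg | hpos
  · have hcore := laplace_final a b c hab hac hcb h (fun x => -g x) hh hmax hh2 hg.neg
      (by simpa using hneg)
    refine hcore.congr fun t => ?_
    have h1 : (∫ x in a..b, Real.exp (t * h x) * -g x) =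
        -∫ x in a..b, Real.exp (t * h x) * g x := by
      rw [← intervalIntegral.integral_neg]
      congr 1
      funext x
      ring
    simp only [h1]
    rw [show Real.sqrt (2 * π / |iteratedDerivWithin 2 h (Set.Icc a b) c|) * -g c *
        (Real.exp (t * h c) / Real.sqrt t) =
        -(Real.sqrt (2 * π / |iteratedDerivWithin 2 h (Set.Icc a b) c|) * g c *
        (Real.exp (t * h c) / Real.sqrt t)) by ring, neg_div_neg_eq]
  · exact laplace_final a b c hab hac hcb h g hh hmax hh2 hg hpos
end

section
/- Let $a<b$, let $h:[a,b]\to\mathbb{R}$ be three times continuously differentiable, attaining its maximum over $[a,b]$ only at an endpoint $c\in\{a,b\}$, with $h'(c)=0$ and $h''(c)\neq 0$, and let $g:[a,b]\to\mathbb{R}$ be continuously differentiable with $g(c)\neq 0$. Then $\int_a^b e^{t h(x)} g(x)\,dx \sim \sqrt{\tfrac{\pi}{2\,|h''(c)|}}\, g(c)\, \tfrac{e^{t h(c)}}{\sqrt{t}}$ as $t\to\infty$. -/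
open Real MeasureTheory Set Filter


lemma my_iteratedDerivWithin_congr_set {f : ℝ → ℝ} {s t : Set ℝ} {x : ℝ} (h : s =ᶠ[nhds x] t)
    (n : ℕ) : iteratedDerivWithin n f s x = iteratedDerivWithin n f t x := by
  simp only [iteratedDerivWithin, iteratedFDerivWithin_congr_set h n]

lemma sqrt_mul_exp_tendsto_zero {c : ℝ} (hc : c < 0) :
    Tendsto (fun t : ℝ => Real.sqrt t * Real.exp (t * c)) atTop (nhds 0) := by
  have h1 : Tendsto (fun s : ℝ => s * Real.exp (-s)) atTop (nhds 0) := by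
    simpa using tendsto_pow_mul_exp_neg_atTop_nhds_zero 1
  have h2 : Tendsto (fun t : ℝ => t * (-2 * c)) atTop atTop :=
    Tendsto.atTop_mul_const (by linarith) tendsto_id
  have h3 : Tendsto (fun t : ℝ => (t * (-2 * c)) * Real.exp (-(t * (-2 * c)))) atTop (nhds 0) :=
    h1.comp h2
  have h4 : Tendsto (fun t : ℝ => t * Real.exp (t * (2 * c))) atTop (nhds 0) := by
    have := h3.const_mul (-2 * c)⁻¹
    rw [mul_zero] at this
    apply this.congr'
    filter_upwards [eventually_gt_atTop 0] with t ht
    have hne : (-2 * c) ≠ 0 := by nlinarith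
    have hcne : c ≠ 0 := ne_of_lt hc
    field_simp
  have h5 : Tendsto (fun t : ℝ => Real.sqrt (t * Real.exp (t * (2 * c)))) atTop (nhds 0) := by
    have := (Real.continuous_sqrt.tendsto 0).comp h4
    simpa [Function.comp_def] using this
  apply h5.congr'
  filter_upwards [eventually_ge_atTop 0] with t ht
  rw [Real.sqrt_mul ht]
  congr 1
  rw [show Real.exp (t * (2 * c)) = (Real.exp (t * c))^2 by
    rw [← Real.exp_nat_mul]; ring_nf, Real.sqrt_sq (Real.exp_nonneg _)]

lemma gauss_trunc {B δ : ℝ} (hB : 0 < B) (hδ : 0 < δ) :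
    Tendsto (fun t : ℝ => Real.sqrt t * ∫ u in (0:ℝ)..δ, Real.exp (-(t*B)*u^2))
      atTop (nhds (Real.sqrt (π/B)/2)) := by
  have hC : (0:ℝ) ≤ ∫ u in Ioi δ, Real.exp (-B*u^2) :=
    setIntegral_nonneg measurableSet_Ioi (fun x _ => (Real.exp_nonneg _))
  set C : ℝ := ∫ u in Ioi δ, Real.exp (-B*u^2) with hCdef
  -- key identity for t > 0
  have key : ∀ t : ℝ, 0 < t →
      Real.sqrt t * ∫ u in (0:ℝ)..δ, Real.exp (-(t*B)*u^2)
        = Real.sqrt (π/B)/2 - Real.sqrt t * ∫ u in Ioi δ, Real.exp (-(t*B)*u^2) := by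
    intro t ht
    have htB : 0 < t * B := mul_pos ht hB
    have hint : Integrable (fun u : ℝ => Real.exp (-(t*B)*u^2)) := integrable_exp_neg_mul_sq htB
    have hsplit : (∫ u in Ioi (0:ℝ), Real.exp (-(t*B)*u^2))
        = (∫ u in Ioc (0:ℝ) δ, Real.exp (-(t*B)*u^2)) + ∫ u in Ioi δ, Real.exp (-(t*B)*u^2) := by
      rw [← setIntegral_union (Set.Ioc_disjoint_Ioi le_rfl) measurableSet_Ioi
        hint.integrableOn hint.integrableOn, Set.Ioc_union_Ioi_eq_Ioi hδ.le]
    have h1 : (∫ u in (0:ℝ)..δ, Real.exp (-(t*B)*u^2))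
        = (∫ u in Ioi (0:ℝ), Real.exp (-(t*B)*u^2)) - ∫ u in Ioi δ, Real.exp (-(t*B)*u^2) := by
      rw [intervalIntegral.integral_of_le hδ.le, hsplit]; ring
    rw [h1, integral_gaussian_Ioi, mul_sub]
    congr 1
    rw [show Real.sqrt t * (Real.sqrt (π/(t*B))/2) = Real.sqrt t * Real.sqrt (π/(t*B)) / 2 by ring,
      ← Real.sqrt_mul ht.le, show t * (π/(t*B)) = π/B by field_simp]
  -- tail bound
  have tailb : ∀ t : ℝ, 1 ≤ t →
      (∫ u in Ioi δ, Real.exp (-(t*B)*u^2)) ≤ Real.exp ((1-t)*(B*δ^2)) * C := by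
    intro t ht
    have htB : 0 < t * B := mul_pos (by linarith) hB
    have h1 : ∀ u ∈ Ioi δ, Real.exp (-(t*B)*u^2) ≤ Real.exp ((1-t)*(B*δ^2)) * Real.exp (-B*u^2) := by
      intro u hu
      rw [← Real.exp_add, Real.exp_le_exp]
      have hu' : δ ≤ u := le_of_lt hu
      have h2 : δ^2 ≤ u^2 := by nlinarith
      nlinarith [mul_nonneg (mul_nonneg (sub_nonneg.2 ht) hB.le) (sub_nonneg.2 h2)]
    calc (∫ u in Ioi δ, Real.exp (-(t*B)*u^2))
        ≤ ∫ u in Ioi δ, Real.exp ((1-t)*(B*δ^2)) * Real.exp (-B*u^2) := by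
          apply setIntegral_mono_on ((integrable_exp_neg_mul_sq htB).integrableOn)
            (((integrable_exp_neg_mul_sq hB).const_mul _).integrableOn) measurableSet_Ioi h1
      _ = Real.exp ((1-t)*(B*δ^2)) * C := by rw [integral_const_mul]
  -- tail tends to zero
  have htail0 : Tendsto (fun t : ℝ => Real.sqrt t * Real.exp ((1-t)*(B*δ^2)) * C)
      atTop (nhds 0) := by
    have hc : -(B*δ^2) < 0 := neg_lt_zero.mpr (by positivity)
    have h0 := (sqrt_mul_exp_tendsto_zero hc).mul_const (Real.exp (B*δ^2) * C)
    rw [zero_mul] at h0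
    apply h0.congr
    intro t
    rw [show (1-t)*(B*δ^2) = B*δ^2 + t * -(B*δ^2) by ring, Real.exp_add]; ring
  have htail : Tendsto (fun t : ℝ => Real.sqrt t * ∫ u in Ioi δ, Real.exp (-(t*B)*u^2))
      atTop (nhds 0) := by
    apply tendsto_of_tendsto_of_tendsto_of_le_of_le' tendsto_const_nhds htail0
    · filter_upwards [eventually_ge_atTop (0:ℝ)] with t ht
      have : (0:ℝ) ≤ ∫ u in Ioi δ, Real.exp (-(t*B)*u^2) :=
        setIntegral_nonneg measurableSet_Ioi (fun x _ => (Real.exp_nonneg _))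
      positivity
    · filter_upwards [eventually_ge_atTop (1:ℝ)] with t ht
      calc Real.sqrt t * ∫ u in Ioi δ, Real.exp (-(t*B)*u^2)
          ≤ Real.sqrt t * (Real.exp ((1-t)*(B*δ^2)) * C) :=
            mul_le_mul_of_nonneg_left (tailb t ht) (Real.sqrt_nonneg t)
        _ = Real.sqrt t * Real.exp ((1-t)*(B*δ^2)) * C := by ring
  have hfin : Tendsto (fun t : ℝ => Real.sqrt (π/B)/2
      - Real.sqrt t * ∫ u in Ioi δ, Real.exp (-(t*B)*u^2)) atTop (nhds (Real.sqrt (π/B)/2)) := by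
    simpa using (tendsto_const_nhds (x := Real.sqrt (π/B)/2) (f := atTop)).sub htail
  apply hfin.congr'
  filter_upwards [eventually_gt_atTop (0:ℝ)] with t ht
  exact (key t ht).symm

lemma icc_eventuallyEq {a b x y : ℝ} (hxb : x ≤ b) (hy : y < x) :
    Icc a x =ᶠ[nhds y] Icc a b := by
  rw [Filter.eventuallyEq_set]
  filter_upwards [Iio_mem_nhds hy] with z hz
  simp only [mem_Icc]
  constructor
  · rintro ⟨h1, h2⟩; exact ⟨h1, le_trans h2 hxb⟩
  · rintro ⟨h1, _⟩; exact ⟨h1, le_of_lt hz⟩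

lemma taylor_est {a b : ℝ} (hab : a < b) {h : ℝ → ℝ} (hh : ContDiffOn ℝ 3 h (Icc a b))
    (hh1 : derivWithin h (Icc a b) a = 0) :
    ∀ ε > 0, ∃ δ > 0, δ ≤ b - a ∧ ∀ x ∈ Icc a (a+δ),
      |h x - h a - iteratedDerivWithin 2 h (Icc a b) a / 2 * (x-a)^2| ≤ ε*(x-a)^2 := by
  intro ε hε
  have hud : UniqueDiffOn ℝ (Icc a b) := uniqueDiffOn_Icc hab
  set H : ℝ → ℝ := iteratedDerivWithin 2 h (Icc a b) with hHdef
  have hHcont : ContinuousOn H (Icc a b) :=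
    hh.continuousOn_iteratedDerivWithin (by norm_num) hud
  have hHa : ContinuousWithinAt H (Icc a b) a :=
    hHcont a (by constructor <;> [exact le_refl a; exact hab.le])
  rw [Metric.continuousWithinAt_iff] at hHa
  obtain ⟨δ₁, hδ₁, hδ₁'⟩ := hHa ε hε
  refine ⟨min δ₁ (b - a), lt_min hδ₁ (by linarith), min_le_right _ _, ?_⟩
  intro x hx
  rcases eq_or_lt_of_le hx.1 with heq | hax
  · simp [← heq]
  have hxb : x ≤ b := le_trans hx.2 (by have := min_le_right δ₁ (b-a); linarith)
  have hcd1 : ContDiffOn ℝ 1 h (Icc a x) :=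
    (hh.of_le (by norm_num)).mono (Icc_subset_Icc le_rfl hxb)
  have hdiff : DifferentiableOn ℝ (iteratedDerivWithin 1 h (Icc a x)) (Ioo a x) := by
    have hd : DifferentiableOn ℝ (iteratedDerivWithin 1 h (Icc a b)) (Icc a b) :=
      hh.differentiableOn_iteratedDerivWithin (by norm_num) hud
    apply (hd.mono (fun y hy => ⟨hy.1.le, le_trans hy.2.le hxb⟩)).congr
    intro y hy
    exact my_iteratedDerivWithin_congr_set (icc_eventuallyEq hxb hy.2) 1
  obtain ⟨x', hx', htay⟩ := taylor_mean_remainder_lagrange (n := 1) hax.ne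
    (by rwa [uIcc_of_le hax.le]) (by rwa [uIcc_of_le hax.le, uIoo_of_le hax.le])
  rw [uIcc_of_le hax.le] at htay
  rw [uIoo_of_le hax.le] at hx'
  have e1 : taylorWithinEval h 1 (Icc a x) a x = h a := by
    rw [taylor_within_apply]
    have hd0 : derivWithin h (Icc a x) a = 0 := by
      rw [derivWithin_congr_set (icc_eventuallyEq hxb hax), hh1]
    have hu1 : UniqueDiffWithinAt ℝ (Icc a x) a := (uniqueDiffOn_Icc hax) a ⟨le_refl a, hax.le⟩
    simp [Finset.sum_range_succ, iteratedDerivWithin_one, hd0]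
  have e2 : iteratedDerivWithin 2 h (Icc a x) x' = H x' :=
    my_iteratedDerivWithin_congr_set (icc_eventuallyEq hxb hx'.2) 2
  rw [e1, e2] at htay
  have hclose : |H x' - H a| < ε := by
    have hm : x' ∈ Icc a b := ⟨hx'.1.le, le_trans hx'.2.le hxb⟩
    have hd : dist x' a < δ₁ := by
      rw [Real.dist_eq, abs_of_nonneg (by linarith [hx'.1] : (0:ℝ) ≤ x' - a)]
      have h1 : x ≤ a + min δ₁ (b-a) := hx.2
      have h2 : min δ₁ (b-a) ≤ δ₁ := min_le_left _ _
      linarith [hx'.2]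
    have := hδ₁' hm hd
    rwa [Real.dist_eq] at this
  have key : h x - h a - H a / 2 * (x-a)^2 = (H x' - H a)/2 * (x-a)^2 := by
    have : h x - h a = H x' * (x - a) ^ 2 / 2 := by
      rw [htay]; norm_num
    rw [this]; ring
  rw [key, abs_mul, abs_of_nonneg (sq_nonneg (x-a))]
  apply mul_le_mul_of_nonneg_right _ (sq_nonneg (x-a))
  rw [abs_div, abs_two]
  calc |H x' - H a| / 2 ≤ ε / 2 := by linarith
    _ ≤ ε := by linarith

set_option maxHeartbeats 1000000 in
lemma laplace_core_s7 {a b : ℝ} (hab : a < b) {h g : ℝ → ℝ} {A : ℝ} (hA : 0 < A)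
    (hch : ContinuousOn h (Icc a b)) (hcg : ContinuousOn g (Icc a b))
    (htay : ∀ ε > 0, ∃ δ > 0, δ ≤ b - a ∧ ∀ x ∈ Icc a (a+δ),
      |h x - h a + A/2*(x-a)^2| ≤ ε*(x-a)^2)
    (hmax : ∀ x ∈ Icc a b, x ≠ a → h x < h a)
    (hga : 0 < g a) :
    Tendsto (fun t : ℝ => Real.sqrt t * Real.exp (-(t * h a)) *
        ∫ x in a..b, Real.exp (t * h x) * g x)
      atTop (nhds (Real.sqrt (π/(2*A)) * g a)) := by
  have hπ := Real.pi_pos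
  set K : ℝ := Real.sqrt (π/(2*A)) * g a with hKdef
  have hsq4 : Real.sqrt 4 = 2 := by
    rw [show (4:ℝ) = 2^2 by norm_num, Real.sqrt_sq (by norm_num)]
  have keq : Real.sqrt (π/(A/2))/2 = Real.sqrt (π/(2*A)) := by
    rw [show π/(A/2) = (π/(2*A))*4 by field_simp; ring, Real.sqrt_mul (by positivity), hsq4]
    ring
  rw [Metric.tendsto_nhds]
  intro ε hε
  -- Step A: choose ε'
  have hu : Tendsto (fun e : ℝ => (g a + e) * (Real.sqrt (π/(A/2 - e))/2))
      (nhdsWithin 0 (Ioi 0)) (nhds K) := by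
    have hc : ContinuousAt (fun e : ℝ => (g a + e) * (Real.sqrt (π/(A/2 - e))/2)) 0 := by
      apply ContinuousAt.mul
      · fun_prop
      · apply ContinuousAt.div_const
        apply Real.continuous_sqrt.continuousAt.comp
        apply ContinuousAt.div continuousAt_const (by fun_prop)
        simp; positivity
    have := hc.tendsto.mono_left (nhdsWithin_le_nhds (s := Ioi (0:ℝ)))
    simpa [keq, hKdef, mul_comm] using this
  have hl : Tendsto (fun e : ℝ => (g a - e) * (Real.sqrt (π/(A/2 + e))/2))
      (nhdsWithin 0 (Ioi 0)) (nhds K) := by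
    have hc : ContinuousAt (fun e : ℝ => (g a - e) * (Real.sqrt (π/(A/2 + e))/2)) 0 := by
      apply ContinuousAt.mul
      · fun_prop
      · apply ContinuousAt.div_const
        apply Real.continuous_sqrt.continuousAt.comp
        apply ContinuousAt.div continuousAt_const (by fun_prop)
        simp; positivity
    have := hc.tendsto.mono_left (nhdsWithin_le_nhds (s := Ioi (0:ℝ)))
    simpa [keq, hKdef, mul_comm] using this
  have hmem : ∀ᶠ e in nhdsWithin (0:ℝ) (Ioi 0), e ∈ Ioo (0:ℝ) (min (A/4) (g a/2)) :=
    Ioo_mem_nhdsGT_of_mem ⟨le_refl _, lt_min (by linarith) (by linarith)⟩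
  obtain ⟨ε', hε'mem, hu', hl'⟩ :=
    (hmem.and ((hu.eventually_lt_const (by linarith : K < K + ε/2)).and
      (hl.eventually_const_lt (by linarith : K - ε/2 < K)))).exists
  obtain ⟨hε'0, hε'top⟩ := hε'mem
  have hε'A : ε' < A/4 := lt_of_lt_of_le hε'top (min_le_left _ _)
  have hε'g : ε' < g a/2 := lt_of_lt_of_le hε'top (min_le_right _ _)
  clear hu hl hmem
  -- Step B: choose δ
  obtain ⟨δ₀, hδ₀pos, hδ₀le, htb⟩ := htay ε' hε'0
  have hga_mem : a ∈ Icc a b := ⟨le_refl a, hab.le⟩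
  have hcga := hcg a hga_mem
  rw [Metric.continuousWithinAt_iff] at hcga
  obtain ⟨δ₂, hδ₂pos, hδ₂'⟩ := hcga ε' hε'0
  set δ : ℝ := min δ₀ (δ₂/2) with hδdef
  have hδpos : 0 < δ := lt_min hδ₀pos (by linarith)
  have hδδ₀ : δ ≤ δ₀ := min_le_left _ _
  have hδδ₂ : δ ≤ δ₂/2 := min_le_right _ _
  set d : ℝ := a + δ with hddef
  have had : a < d := by rw [hddef]; linarith
  have hda : d - a = δ := by rw [hddef]; ring
  have hdb : d ≤ b := by rw [hddef]; linarith
  have hsub : Icc a d ⊆ Icc a b := Icc_subset_Icc le_rfl hdb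
  have hBm : (0:ℝ) < A/2 - ε' := by linarith
  have hBp : (0:ℝ) < A/2 + ε' := by linarith
  -- pointwise facts on Icc a d
  have hfact : ∀ x ∈ Icc a d, (h a - (A/2+ε')*(x-a)^2 ≤ h x ∧ h x ≤ h a - (A/2-ε')*(x-a)^2)
      ∧ (g a - ε' ≤ g x ∧ g x ≤ g a + ε') := by
    intro x hx
    have hx0 : x ∈ Icc a (a + δ₀) := ⟨hx.1, le_trans hx.2 (by rw [hddef]; linarith)⟩
    have h1 := htb x hx0
    rw [abs_le] at h1
    have hgd : dist x a < δ₂ := by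
      rw [Real.dist_eq, abs_of_nonneg (by linarith [hx.1])]
      have h4 : x ≤ a + δ := hx.2
      linarith
    have h2 := hδ₂' (hsub hx) hgd
    rw [Real.dist_eq, abs_lt] at h2
    refine ⟨⟨by nlinarith [h1.1], by nlinarith [h1.2]⟩, ⟨by linarith [h2.1], by linarith [h2.2]⟩⟩
  -- continuity & integrability
  have hcont : ∀ t : ℝ, ContinuousOn (fun x => Real.exp (t * h x) * g x) (Icc a b) := fun t =>
    (Real.continuous_exp.comp_continuousOn (continuousOn_const.mul hch)).mul hcg
  have hint1 : ∀ t : ℝ, IntervalIntegrable (fun x => Real.exp (t * h x) * g x) volume a d :=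
    fun t => ((hcont t).mono hsub).intervalIntegrable_of_Icc had.le
  have hint2 : ∀ t : ℝ, IntervalIntegrable (fun x => Real.exp (t * h x) * g x) volume d b :=
    fun t => ((hcont t).mono (Icc_subset_Icc (by linarith) le_rfl)).intervalIntegrable_of_Icc hdb
  have hsplit : ∀ t : ℝ, (∫ x in a..b, Real.exp (t * h x) * g x)
      = (∫ x in a..d, Real.exp (t * h x) * g x) + ∫ x in d..b, Real.exp (t * h x) * g x :=
    fun t => (intervalIntegral.integral_add_adjacent_intervals (hint1 t) (hint2 t)).symm
  -- tail estimate
  obtain ⟨x₀, hx₀mem, hx₀max⟩ := isCompact_Icc.exists_isMaxOn (nonempty_Icc.mpr hdb)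
    (hch.mono (Icc_subset_Icc (by linarith) le_rfl))
  have hx₀a : x₀ ≠ a := by
    intro hE
    have := hx₀mem.1
    rw [hE] at this
    linarith [had]
  have hm : h x₀ < h a := hmax x₀ ⟨by linarith [hx₀mem.1], hx₀mem.2⟩ hx₀a
  obtain ⟨Mg, hMg⟩ := isCompact_Icc.exists_bound_of_continuousOn hcg
  have hMg0 : 0 ≤ Mg := le_trans (norm_nonneg (g a)) (hMg a hga_mem)
  have htail1 : ∀ t : ℝ, 0 ≤ t → |∫ x in d..b, Real.exp (t * h x) * g x|
      ≤ Real.exp (t * h x₀) * Mg * (b - d) := by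
    intro t ht
    have hb1 : ∀ x ∈ Set.uIoc d b, ‖Real.exp (t * h x) * g x‖ ≤ Real.exp (t * h x₀) * Mg := by
      intro x hx
      rw [Set.uIoc_of_le hdb] at hx
      have hxm : x ∈ Icc a b := ⟨by linarith [hx.1], hx.2⟩
      rw [Real.norm_eq_abs, abs_mul, Real.abs_exp]
      apply mul_le_mul _ (hMg x hxm) (norm_nonneg _) (Real.exp_nonneg _)
      apply Real.exp_le_exp.mpr
      exact mul_le_mul_of_nonneg_left ((isMaxOn_iff.mp hx₀max) x ⟨hx.1.le, hx.2⟩) ht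
    have := intervalIntegral.norm_integral_le_of_norm_le_const hb1
    rw [Real.norm_eq_abs] at this
    calc |∫ x in d..b, Real.exp (t * h x) * g x| ≤ Real.exp (t * h x₀) * Mg * |b - d| := this
      _ = Real.exp (t * h x₀) * Mg * (b - d) := by rw [abs_of_nonneg (by linarith)]
  have hTail0 : Tendsto (fun t : ℝ => Real.sqrt t * Real.exp (t * (h x₀ - h a)) * (Mg * (b - d)))
      atTop (nhds 0) := by
    have := (sqrt_mul_exp_tendsto_zero (by linarith : h x₀ - h a < 0)).mul_const (Mg * (b-d))
    simpa using this
  have htail : ∀ t : ℝ, 0 ≤ t →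
      |Real.sqrt t * Real.exp (-(t * h a)) * ∫ x in d..b, Real.exp (t * h x) * g x|
      ≤ Real.sqrt t * Real.exp (t * (h x₀ - h a)) * (Mg * (b - d)) := by
    intro t ht
    rw [abs_mul, abs_mul, Real.abs_exp, abs_of_nonneg (Real.sqrt_nonneg t)]
    calc Real.sqrt t * Real.exp (-(t * h a)) * |∫ x in d..b, Real.exp (t * h x) * g x|
        ≤ Real.sqrt t * Real.exp (-(t * h a)) * (Real.exp (t * h x₀) * Mg * (b - d)) :=
          mul_le_mul_of_nonneg_left (htail1 t ht) (by positivity)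
      _ = Real.sqrt t * Real.exp (t * (h x₀ - h a)) * (Mg * (b - d)) := by
          rw [show Real.sqrt t * Real.exp (-(t * h a)) * (Real.exp (t * h x₀) * Mg * (b - d))
              = Real.sqrt t * (Real.exp (-(t * h a)) * Real.exp (t * h x₀)) * (Mg * (b - d)) by
              ring, ← Real.exp_add, show -(t * h a) + t * h x₀ = t * (h x₀ - h a) by ring]
  -- main part bounds
  have hmain_up : ∀ t : ℝ, 0 ≤ t → (∫ x in a..d, Real.exp (t * h x) * g x)
      ≤ Real.exp (t * h a) * (g a + ε') * ∫ u in (0:ℝ)..δ, Real.exp (-(t*(A/2-ε'))*u^2) := by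
    intro t ht
    have step : (∫ x in a..d, Real.exp (t * h x) * g x)
        ≤ ∫ x in a..d, Real.exp (t * h a) * (g a + ε') * Real.exp (-(t*(A/2-ε'))*((x-a))^2) := by
      apply intervalIntegral.integral_mono_on had.le (hint1 t)
        (Continuous.intervalIntegrable (by fun_prop) a d)
      intro x hx
      obtain ⟨⟨_, hup⟩, ⟨hglo, hgup⟩⟩ := hfact x hx
      have e1 : Real.exp (t * h x)
          ≤ Real.exp (t * h a) * Real.exp (-(t*(A/2-ε'))*(x-a)^2) := by
        rw [← Real.exp_add, Real.exp_le_exp]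
        nlinarith [sq_nonneg (x-a)]
      calc Real.exp (t * h x) * g x
          ≤ (Real.exp (t * h a) * Real.exp (-(t*(A/2-ε'))*(x-a)^2)) * (g a + ε') :=
            mul_le_mul e1 hgup (by linarith) (by positivity)
        _ = Real.exp (t * h a) * (g a + ε') * Real.exp (-(t*(A/2-ε'))*((x-a))^2) := by ring
    calc (∫ x in a..d, Real.exp (t * h x) * g x)
        ≤ ∫ x in a..d, Real.exp (t * h a) * (g a + ε') * Real.exp (-(t*(A/2-ε'))*((x-a))^2) := step
      _ = Real.exp (t * h a) * (g a + ε')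
            * ∫ x in a..d, Real.exp (-(t*(A/2-ε'))*((x-a))^2) := by
          rw [← intervalIntegral.integral_const_mul]
      _ = Real.exp (t * h a) * (g a + ε') * ∫ u in (0:ℝ)..δ, Real.exp (-(t*(A/2-ε'))*u^2) := by
          rw [intervalIntegral.integral_comp_sub_right (fun u => Real.exp (-(t*(A/2-ε'))*u^2)) a]
          norm_num [hda]
  have hmain_lo : ∀ t : ℝ, 0 ≤ t →
      Real.exp (t * h a) * (g a - ε') * (∫ u in (0:ℝ)..δ, Real.exp (-(t*(A/2+ε'))*u^2))
      ≤ ∫ x in a..d, Real.exp (t * h x) * g x := by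
    intro t ht
    have step : (∫ x in a..d, Real.exp (t * h a) * (g a - ε') * Real.exp (-(t*(A/2+ε'))*((x-a))^2))
        ≤ ∫ x in a..d, Real.exp (t * h x) * g x := by
      apply intervalIntegral.integral_mono_on had.le
        (Continuous.intervalIntegrable (by fun_prop) a d) (hint1 t)
      intro x hx
      obtain ⟨⟨hlo, _⟩, ⟨hglo, _⟩⟩ := hfact x hx
      have e1 : Real.exp (t * h a) * Real.exp (-(t*(A/2+ε'))*(x-a)^2)
          ≤ Real.exp (t * h x) := by
        rw [← Real.exp_add, Real.exp_le_exp]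
        nlinarith [sq_nonneg (x-a)]
      calc Real.exp (t * h a) * (g a - ε') * Real.exp (-(t*(A/2+ε'))*((x-a))^2)
          = (Real.exp (t * h a) * Real.exp (-(t*(A/2+ε'))*(x-a)^2)) * (g a - ε') := by ring
        _ ≤ Real.exp (t * h x) * g x :=
            mul_le_mul e1 hglo (by linarith) (Real.exp_nonneg _)
    have E : (∫ x in a..d, Real.exp (t * h a) * (g a - ε') * Real.exp (-(t*(A/2+ε'))*((x-a))^2))
        = Real.exp (t * h a) * (g a - ε')
            * ∫ u in (0:ℝ)..δ, Real.exp (-(t*(A/2+ε'))*u^2) := by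
      rw [intervalIntegral.integral_comp_sub_right
        (fun u => Real.exp (t * h a) * (g a - ε') * Real.exp (-(t*(A/2+ε'))*u^2)) a,
        intervalIntegral.integral_const_mul]
      norm_num [hda]
    calc Real.exp (t * h a) * (g a - ε') * (∫ u in (0:ℝ)..δ, Real.exp (-(t*(A/2+ε'))*u^2))
        = ∫ x in a..d, Real.exp (t * h a) * (g a - ε')
            * Real.exp (-(t*(A/2+ε'))*((x-a))^2) := E.symm
      _ ≤ ∫ x in a..d, Real.exp (t * h x) * g x := step
  -- limits of the comparison functions
  have hU : Tendsto (fun t : ℝ => (g a + ε')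
        * (Real.sqrt t * ∫ u in (0:ℝ)..δ, Real.exp (-(t*(A/2-ε'))*u^2))
        + Real.sqrt t * Real.exp (t * (h x₀ - h a)) * (Mg * (b - d)))
      atTop (nhds ((g a + ε') * (Real.sqrt (π/(A/2-ε'))/2))) := by
    have := ((gauss_trunc hBm hδpos).const_mul (g a + ε')).add hTail0
    simpa using this
  have hL : Tendsto (fun t : ℝ => (g a - ε')
        * (Real.sqrt t * ∫ u in (0:ℝ)..δ, Real.exp (-(t*(A/2+ε'))*u^2))
        - Real.sqrt t * Real.exp (t * (h x₀ - h a)) * (Mg * (b - d)))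
      atTop (nhds ((g a - ε') * (Real.sqrt (π/(A/2+ε'))/2))) := by
    have := ((gauss_trunc hBp hδpos).const_mul (g a - ε')).sub hTail0
    simpa using this
  have evU := hU.eventually_lt_const (show (g a + ε') * (Real.sqrt (π/(A/2-ε'))/2) < K + ε by
    linarith)
  have evL := hL.eventually_const_lt (show K - ε < (g a - ε') * (Real.sqrt (π/(A/2+ε'))/2) by
    linarith)
  filter_upwards [evU, evL, eventually_ge_atTop (0:ℝ)] with t h1 h2 ht
  rw [Real.dist_eq, abs_sub_lt_iff]
  have e0 : Real.exp (-(t * h a)) * Real.exp (t * h a) = 1 := by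
    rw [← Real.exp_add]; simp
  have hST : (0:ℝ) ≤ Real.sqrt t * Real.exp (-(t * h a)) := by positivity
  have p2u : Real.sqrt t * Real.exp (-(t * h a)) * ∫ x in d..b, Real.exp (t * h x) * g x
      ≤ Real.sqrt t * Real.exp (t * (h x₀ - h a)) * (Mg * (b - d)) :=
    le_trans (le_abs_self _) (htail t ht)
  have p2l : -(Real.sqrt t * Real.exp (t * (h x₀ - h a)) * (Mg * (b - d)))
      ≤ Real.sqrt t * Real.exp (-(t * h a)) * ∫ x in d..b, Real.exp (t * h x) * g x := by
    have := htail t ht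
    have h3 := neg_abs_le (Real.sqrt t * Real.exp (-(t * h a))
      * ∫ x in d..b, Real.exp (t * h x) * g x)
    linarith
  have p1u : Real.sqrt t * Real.exp (-(t * h a)) * ∫ x in a..d, Real.exp (t * h x) * g x
      ≤ (g a + ε') * (Real.sqrt t * ∫ u in (0:ℝ)..δ, Real.exp (-(t*(A/2-ε'))*u^2)) := by
    calc Real.sqrt t * Real.exp (-(t * h a)) * ∫ x in a..d, Real.exp (t * h x) * g x
        ≤ Real.sqrt t * Real.exp (-(t * h a)) * (Real.exp (t * h a) * (g a + ε')
            * ∫ u in (0:ℝ)..δ, Real.exp (-(t*(A/2-ε'))*u^2)) :=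
          mul_le_mul_of_nonneg_left (hmain_up t ht) hST
      _ = (Real.exp (-(t * h a)) * Real.exp (t * h a)) * ((g a + ε')
            * (Real.sqrt t * ∫ u in (0:ℝ)..δ, Real.exp (-(t*(A/2-ε'))*u^2))) := by ring
      _ = (g a + ε') * (Real.sqrt t * ∫ u in (0:ℝ)..δ, Real.exp (-(t*(A/2-ε'))*u^2)) := by
          rw [e0, one_mul]
  have p1l : (g a - ε') * (Real.sqrt t * ∫ u in (0:ℝ)..δ, Real.exp (-(t*(A/2+ε'))*u^2))
      ≤ Real.sqrt t * Real.exp (-(t * h a)) * ∫ x in a..d, Real.exp (t * h x) * g x := by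
    calc (g a - ε') * (Real.sqrt t * ∫ u in (0:ℝ)..δ, Real.exp (-(t*(A/2+ε'))*u^2))
        = (Real.exp (-(t * h a)) * Real.exp (t * h a)) * ((g a - ε')
            * (Real.sqrt t * ∫ u in (0:ℝ)..δ, Real.exp (-(t*(A/2+ε'))*u^2))) := by
          rw [e0, one_mul]
      _ = Real.sqrt t * Real.exp (-(t * h a)) * (Real.exp (t * h a) * (g a - ε')
            * ∫ u in (0:ℝ)..δ, Real.exp (-(t*(A/2+ε'))*u^2)) := by ring
      _ ≤ Real.sqrt t * Real.exp (-(t * h a)) * ∫ x in a..d, Real.exp (t * h x) * g x :=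
          mul_le_mul_of_nonneg_left (hmain_lo t ht) hST
  rw [hsplit t, mul_add]
  have hS1 := lt_of_le_of_lt (add_le_add p1u p2u) h1
  have hS2 := lt_of_lt_of_le h2 (le_trans (le_of_eq (sub_eq_add_neg _ _)) (add_le_add p1l p2l))
  constructor
  · linarith [hS1]
  · linarith [hS2]

lemma laplace_left {a b : ℝ} (hab : a < b) {h g : ℝ → ℝ}
    (hh : ContDiffOn ℝ 3 h (Icc a b))
    (hmax : ∀ x ∈ Icc a b, x ≠ a → h x < h a)
    (hh1 : derivWithin h (Icc a b) a = 0)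
    (hh2 : iteratedDerivWithin 2 h (Icc a b) a ≠ 0)
    (hcg : ContinuousOn g (Icc a b)) (hga : 0 < g a) :
    Tendsto (fun t : ℝ => Real.sqrt t * Real.exp (-(t * h a)) *
        ∫ x in a..b, Real.exp (t * h x) * g x)
      atTop (nhds (Real.sqrt (π/(2*|iteratedDerivWithin 2 h (Icc a b) a|)) * g a)) := by
  set H : ℝ := iteratedDerivWithin 2 h (Icc a b) a with hHdef
  -- H is negative
  have hHneg : H < 0 := by
    rcases lt_or_gt_of_ne hh2 with hlt | hgt
    · exact hlt
    exfalso
    obtain ⟨δ, hδpos, hδle, htb⟩ := taylor_est hab hh hh1 (H/4) (by positivity)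
    have hmem : a + δ ∈ Icc a (a+δ) := ⟨by linarith, le_refl _⟩
    have h1 := htb (a+δ) hmem
    rw [abs_le] at h1
    have h2 : h (a+δ) < h a := hmax (a+δ) ⟨by linarith, by linarith⟩ (by intro hE; linarith [hδpos, congrArg (· - a) hE] )
    have h3 : (0:ℝ) < δ^2 := by positivity
    have h4 := h1.1
    simp only [add_sub_cancel_left] at h4
    nlinarith
  have hA : 0 < -H := by linarith
  have habs : |H| = -H := abs_of_neg hHneg
  rw [habs]
  apply laplace_core_s7 hab hA (hh.continuousOn) hcg _ hmax hga
  intro ε hε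
  obtain ⟨δ, hδpos, hδle, htb⟩ := taylor_est hab hh hh1 ε hε
  refine ⟨δ, hδpos, hδle, fun x hx => ?_⟩
  have := htb x hx
  rw [show h x - h a + -H/2*(x-a)^2 = h x - h a - H/2*(x-a)^2 by ring]
  exact this

lemma laplace_left' {a b : ℝ} (hab : a < b) {h g : ℝ → ℝ}
    (hh : ContDiffOn ℝ 3 h (Icc a b))
    (hmax : ∀ x ∈ Icc a b, x ≠ a → h x < h a)
    (hh1 : derivWithin h (Icc a b) a = 0)
    (hh2 : iteratedDerivWithin 2 h (Icc a b) a ≠ 0)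
    (hcg : ContinuousOn g (Icc a b)) (hga : g a ≠ 0) :
    Tendsto (fun t : ℝ => Real.sqrt t * Real.exp (-(t * h a)) *
        ∫ x in a..b, Real.exp (t * h x) * g x)
      atTop (nhds (Real.sqrt (π/(2*|iteratedDerivWithin 2 h (Icc a b) a|)) * g a)) := by
  rcases lt_or_gt_of_ne hga with hneg | hpos
  · have := laplace_left hab hh hmax hh1 hh2 (g := fun x => -g x) hcg.neg (by simpa using hneg)
    have h2 := this.neg
    rw [show -(√(π / (2 * |iteratedDerivWithin 2 h (Icc a b) a|)) * (fun x => -g x) a)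
      = √(π / (2 * |iteratedDerivWithin 2 h (Icc a b) a|)) * g a by simp] at h2
    apply h2.congr
    intro t
    rw [show (∫ x in a..b, Real.exp (t * h x) * -g x) = -∫ x in a..b, Real.exp (t * h x) * g x by
      rw [← intervalIntegral.integral_neg]; congr 1; ext x; ring]
    ring
  · exact laplace_left hab hh hmax hh1 hh2 hcg hpos

lemma laplace_right' {a b : ℝ} (hab : a < b) {h g : ℝ → ℝ}
    (hh : ContDiffOn ℝ 3 h (Icc a b))
    (hmax : ∀ x ∈ Icc a b, x ≠ b → h x < h b)
    (hh1 : derivWithin h (Icc a b) b = 0)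
    (hh2 : iteratedDerivWithin 2 h (Icc a b) b ≠ 0)
    (hcg : ContinuousOn g (Icc a b)) (hgb : g b ≠ 0) :
    Tendsto (fun t : ℝ => Real.sqrt t * Real.exp (-(t * h b)) *
        ∫ x in a..b, Real.exp (t * h x) * g x)
      atTop (nhds (Real.sqrt (π/(2*|iteratedDerivWithin 2 h (Icc a b) b|)) * g b)) := by
  have hud : UniqueDiffOn ℝ (Icc a b) := uniqueDiffOn_Icc hab
  have ha_mem : a ∈ Icc a b := ⟨le_refl a, hab.le⟩
  have hb_mem : b ∈ Icc a b := ⟨hab.le, le_refl b⟩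
  have hba : a + b - a = b := by ring
  set h2 : ℝ → ℝ := fun y => h (a + b - y) with hh2def
  set g2 : ℝ → ℝ := fun y => g (a + b - y) with hg2def
  have hr : ContDiff ℝ 3 (fun y : ℝ => a + b - y) := by fun_prop
  have hmaps : MapsTo (fun y : ℝ => a + b - y) (Icc a b) (Icc a b) := by
    intro y hy
    simp only [mem_Icc] at *
    constructor <;> linarith [hy.1, hy.2]
  have hh2cd : ContDiffOn ℝ 3 h2 (Icc a b) := hh.comp hr.contDiffOn hmaps
  have hg2c : ContinuousOn g2 (Icc a b) := hcg.comp hr.continuous.continuousOn hmaps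
  have hD : DifferentiableOn ℝ h (Icc a b) := hh.differentiableOn (by norm_num)
  have E1 : ∀ y ∈ Icc a b, derivWithin h2 (Icc a b) y = -(derivWithin h (Icc a b) (a + b - y)) := by
    intro y hy
    have h1 : HasDerivWithinAt h (derivWithin h (Icc a b) (a+b-y)) (Icc a b) (a+b-y) :=
      (hD _ (hmaps hy)).hasDerivWithinAt
    have hrd : HasDerivWithinAt (fun z : ℝ => a + b - z) (-1) (Icc a b) y := by
      simpa using (hasDerivWithinAt_id y (Icc a b)).const_sub (a+b)
    have h3 : HasDerivWithinAt h2 (derivWithin h (Icc a b) (a+b-y) * (-1)) (Icc a b) y :=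
      HasDerivWithinAt.comp y h1 hrd hmaps
    rw [h3.derivWithin (hud y hy)]; ring
  have hh1' : derivWithin h2 (Icc a b) a = 0 := by
    rw [E1 a ha_mem, hba, hh1, neg_zero]
  have hD2 : ContDiffOn ℝ 2 (derivWithin h (Icc a b)) (Icc a b) := hh.derivWithin hud (by norm_num)
  have E2 : iteratedDerivWithin 2 h2 (Icc a b) a = iteratedDerivWithin 2 h (Icc a b) b := by
    have step1 : ∀ (f : ℝ → ℝ), ∀ x ∈ Icc a b, iteratedDerivWithin 2 f (Icc a b) x
        = derivWithin (derivWithin f (Icc a b)) (Icc a b) x := by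
      intro f x hx
      rw [show (2:ℕ) = 1 + 1 from rfl, iteratedDerivWithin_succ]
      apply derivWithin_congr
      · intro y hy; exact congrFun iteratedDerivWithin_one y
      · exact congrFun iteratedDerivWithin_one x
    rw [step1 h2 a ha_mem, step1 h b hb_mem]
    have c1 : derivWithin (derivWithin h2 (Icc a b)) (Icc a b) a
        = derivWithin (fun y => -(derivWithin h (Icc a b) (a + b - y))) (Icc a b) a :=
      derivWithin_congr E1 (E1 a ha_mem)
    rw [c1, derivWithin.fun_neg]
    have h1 : HasDerivWithinAt (derivWithin h (Icc a b))
        (derivWithin (derivWithin h (Icc a b)) (Icc a b) b) (Icc a b) (a + b - a) := by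
      rw [hba]
      exact ((hD2.differentiableOn (by norm_num)) b hb_mem).hasDerivWithinAt
    have hrd : HasDerivWithinAt (fun z : ℝ => a + b - z) (-1) (Icc a b) a := by
      simpa using (hasDerivWithinAt_id a (Icc a b)).const_sub (a+b)
    have h3 : HasDerivWithinAt (fun y => derivWithin h (Icc a b) (a + b - y))
        (derivWithin (derivWithin h (Icc a b)) (Icc a b) b * (-1)) (Icc a b) a :=
      HasDerivWithinAt.comp a h1 hrd hmaps
    rw [h3.derivWithin (hud a ha_mem)]; ring
  have hha' : h2 a = h b := by rw [hh2def]; simp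
  have hmax' : ∀ x ∈ Icc a b, x ≠ a → h2 x < h2 a := by
    intro x hx hxa
    have hne : (a + b - x) ≠ b := fun hE => hxa (by linarith [hE, sub_eq_iff_eq_add.mp hE])
    have := hmax (a+b-x) (hmaps hx) hne
    rw [hh2def]
    simpa using this
  have hg2b : g2 a ≠ 0 := by rw [hg2def]; simpa [hba] using hgb
  have main := laplace_left' hab hh2cd hmax' hh1' (by rw [E2]; exact hh2) hg2c hg2b
  rw [E2, hha', show g2 a = g b by rw [hg2def]; simp] at main
  apply main.congr
  intro t
  congr 1
  have heq : (fun x => Real.exp (t * h2 x) * g2 x)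
      = (fun x => (fun y => Real.exp (t * h y) * g y) (a + b - x)) := by
    rw [hh2def, hg2def]
  rw [heq, intervalIntegral.integral_comp_sub_left (fun y => Real.exp (t * h y) * g y) (a+b)]
  congr 1 <;> ring

/-- Classical Laplace's method, endpoint maximum with `h'(c) = 0`:
`∫ e^{th} g ∼ √(π/(2|h''(c)|)) g(c) e^{th(c)} / √t` as `t → ∞`. -/
theorem laplace_endpoint_critical_classical
    (a b c : ℝ) (hab : a < b) (hc : c = a ∨ c = b)
    (h g : ℝ → ℝ)
    (hh : ContDiffOn ℝ 3 h (Set.Icc a b))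
    (hmax : ∀ x ∈ Set.Icc a b, x ≠ c → h x < h c)
    (hh1 : derivWithin h (Set.Icc a b) c = 0)
    (hh2 : iteratedDerivWithin 2 h (Set.Icc a b) c ≠ 0)
    (hg : ContDiffOn ℝ 1 g (Set.Icc a b))
    (hgc : g c ≠ 0) :
    Filter.Tendsto
      (fun t : ℝ => (∫ x in a..b, Real.exp (t * h x) * g x) /
        (Real.sqrt (π / (2 * |iteratedDerivWithin 2 h (Set.Icc a b) c|)) * g c *
          (Real.exp (t * h c) / Real.sqrt t)))
      Filter.atTop (nhds 1) := by
  have hπ := Real.pi_pos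
  have hS : Tendsto (fun t : ℝ => Real.sqrt t * Real.exp (-(t * h c)) *
        ∫ x in a..b, Real.exp (t * h x) * g x)
      atTop (nhds (Real.sqrt (π/(2*|iteratedDerivWithin 2 h (Set.Icc a b) c|)) * g c)) := by
    rcases hc with rfl | rfl
    · exact laplace_left' hab hh hmax hh1 hh2 hg.continuousOn hgc
    · exact laplace_right' hab hh hmax hh1 hh2 hg.continuousOn hgc
  set C := Real.sqrt (π/(2*|iteratedDerivWithin 2 h (Set.Icc a b) c|)) * g c with hCdef
  have hC : C ≠ 0 := by
    apply mul_ne_zero _ hgc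
    have habs : 0 < |iteratedDerivWithin 2 h (Set.Icc a b) c| := abs_pos.mpr hh2
    exact ne_of_gt (Real.sqrt_pos.mpr (by positivity))
  have h1 := hS.div_const C
  rw [div_self hC] at h1
  apply h1.congr'
  filter_upwards [eventually_gt_atTop (0:ℝ)] with t ht
  have hst : Real.sqrt t ≠ 0 := ne_of_gt (Real.sqrt_pos.mpr ht)
  have hexp : Real.exp (t * h c) ≠ 0 := Real.exp_ne_zero _
  rw [Real.exp_neg]
  field_simp
end

section
/- Let $a<b$, let $h:[a,b]\to\mathbb{R}$ be three times continuously differentiable, attaining its maximum over $[a,b]$ only at an endpoint $c\in\{a,b\}$, with $h'(c)\neq 0$ and $h''(c)\neq 0$, and let $g:[a,b]\to\mathbb{R}$ be continuously differentiable with $g(c)\neq 0$. Then $\int_a^b e^{t h(x)} g(x)\,dx \sim \tfrac{g(c)}{|h'(c)|}\, \tfrac{e^{t h(c)}}{t}$ as $t\to\infty$. -/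
open Real MeasureTheory Set Filter

lemma integral_exp_aux (b δ c : ℝ) (hc : c ≠ 0) :
    ∫ x in (b - δ)..b, Real.exp (c * (x - b)) = (1 - Real.exp (-(c * δ))) / c := by
  rw [intervalIntegral.integral_comp_sub_right (fun u => Real.exp (c * u)) b]
  rw [intervalIntegral.integral_comp_mul_left (fun u => Real.exp u) hc]
  simp [integral_exp]
  field_simp

set_option maxHeartbeats 1000000 in
lemma laplace_core_s8 (a b L M : ℝ) (hab : a < b) (F G : ℝ → ℝ)
    (hF : ContinuousOn F (Set.Icc a b)) (hG : ContinuousOn G (Set.Icc a b))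
    (hFb : F b = 0) (hFneg : ∀ x ∈ Set.Ico a b, F x < 0)
    (hL : 0 < L) (hM : 0 < M) (hGb : G b = M)
    (hFd : Tendsto (fun x => F x / (x - b)) (nhdsWithin b (Set.Ico a b)) (nhds L)) :
    Tendsto (fun t => t * ∫ x in a..b, Real.exp (t * F x) * G x) atTop (nhds (M / L)) := by
  rw [Metric.tendsto_nhds]
  intro ε' hε'
  -- Step 1: choose ε
  have hchoice : ∃ ε : ℝ, 0 < ε ∧ ε < M ∧ ε < L ∧
      (M + ε) / (L - ε) < M / L + ε' / 2 ∧ M / L - ε' / 4 < (M - ε) / (L + ε) := by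
    have c1 : ContinuousAt (fun s : ℝ => (M + s) / (L - s)) 0 := by
      apply ContinuousAt.div
      · fun_prop
      · fun_prop
      · simpa using hL.ne'
    have c2 : ContinuousAt (fun s : ℝ => (M - s) / (L + s)) 0 := by
      apply ContinuousAt.div
      · fun_prop
      · fun_prop
      · simpa using hL.ne'
    have e1 : ∀ᶠ s in nhds (0:ℝ), (M + s) / (L - s) < M / L + ε' / 2 := by
      have := c1.tendsto
      simp only [add_zero, sub_zero] at this
      exact this.eventually_lt_const (by linarith)
    have e2 : ∀ᶠ s in nhds (0:ℝ), M / L - ε' / 4 < (M - s) / (L + s) := by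
      have := c2.tendsto
      simp only [add_zero, sub_zero] at this
      exact this.eventually_const_lt (by linarith)
    have e3 : ∀ᶠ s in nhds (0:ℝ), s < M := tendsto_id.eventually_lt_const hM
    have e4 : ∀ᶠ s in nhds (0:ℝ), s < L := tendsto_id.eventually_lt_const hL
    have big : ∀ᶠ s in nhdsWithin (0:ℝ) (Set.Ioi 0),
        (((M + s) / (L - s) < M / L + ε' / 2 ∧ M / L - ε' / 4 < (M - s) / (L + s)) ∧ s < M) ∧ s < L :=
      (((e1.and e2).and e3).and e4).filter_mono nhdsWithin_le_nhds
    obtain ⟨s, ⟨⟨⟨h1, h2⟩, h3⟩, h4⟩, hs⟩ := (big.and self_mem_nhdsWithin).exists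
    exact ⟨s, hs, h3, h4, h1, h2⟩
  obtain ⟨ε, hε0, hεM, hεL, hub, hlb⟩ := hchoice
  have hbmem : b ∈ Set.Icc a b := ⟨hab.le, le_refl b⟩
  -- Step 2: choose δ
  have hGev : ∀ᶠ x in nhdsWithin b (Set.Ico a b), |G x - M| < ε := by
    have h1 : Tendsto G (nhdsWithin b (Set.Icc a b)) (nhds M) := by
      have := (hG b hbmem).tendsto
      rwa [hGb] at this
    have h2 := h1.mono_left (nhdsWithin_mono b Set.Ico_subset_Icc_self)
    have := Metric.tendsto_nhds.mp h2 ε hε0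
    simpa [Real.dist_eq] using this
  have hFev : ∀ᶠ x in nhdsWithin b (Set.Ico a b),
      L - ε < F x / (x - b) ∧ F x / (x - b) < L + ε := by
    have h1 := hFd.eventually_const_lt (show L - ε < L by linarith)
    have h2 := hFd.eventually_lt_const (show L < L + ε by linarith)
    exact h1.and h2
  obtain ⟨δ₁, hδ₁, hδball⟩ := Metric.mem_nhdsWithin_iff.mp (hGev.and hFev)
  set δ : ℝ := min (δ₁ / 2) (b - a) with hδdef
  have hδ0 : 0 < δ := lt_min (by linarith) (by linarith)
  have hδba : δ ≤ b - a := min_le_right _ _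
  have haδ : a ≤ b - δ := by linarith
  have hδb : b - δ ≤ b := by linarith
  -- key bounds on [b-δ, b]
  have hkey : ∀ x ∈ Set.Ico (b - δ) b,
      (|G x - M| < ε ∧ (L - ε < F x / (x - b) ∧ F x / (x - b) < L + ε)) := by
    intro x hx
    apply hδball
    constructor
    · rw [Metric.mem_ball, Real.dist_eq, abs_lt]
      have h1 := hx.1; have h2 := hx.2
      have : δ ≤ δ₁ / 2 := min_le_left _ _
      constructor <;> linarith
    · exact ⟨by linarith [hx.1], hx.2⟩
  -- Step 3: pointwise bounds on Icc (b-δ) b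
  have hFbound : ∀ x ∈ Set.Icc (b - δ) b, -(L + ε) * (b - x) ≤ F x ∧ F x ≤ -(L - ε) * (b - x) := by
    intro x hx
    rcases eq_or_lt_of_le hx.2 with heq | hlt
    · subst heq; simp [hFb]
    · obtain ⟨_, hq1, hq2⟩ := hkey x ⟨hx.1, hlt⟩
      have hxb : x - b < 0 := by linarith
      have hq : F x = F x / (x - b) * (x - b) := (div_mul_cancel₀ _ (by linarith)).symm
      constructor <;> nlinarith
  have hGbound : ∀ x ∈ Set.Icc (b - δ) b, M - ε ≤ G x ∧ G x ≤ M + ε := by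
    intro x hx
    rcases eq_or_lt_of_le hx.2 with heq | hlt
    · subst heq; rw [hGb]; constructor <;> linarith
    · obtain ⟨hg1, _⟩ := hkey x ⟨hx.1, hlt⟩
      rw [abs_lt] at hg1
      constructor <;> linarith
  -- integrability
  have hcontI : ∀ t : ℝ, ContinuousOn (fun x => Real.exp (t * F x) * G x) (Set.Icc a b) := by
    intro t
    exact ((continuous_exp.comp_continuousOn (continuousOn_const.mul hF)).mul hG)
  have hint1 : ∀ t : ℝ, IntervalIntegrable (fun x => Real.exp (t * F x) * G x) volume a (b - δ) := by
    intro t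
    exact ((hcontI t).mono (Set.Icc_subset_Icc (le_refl a) (by linarith))).intervalIntegrable_of_Icc haδ
  have hint2 : ∀ t : ℝ, IntervalIntegrable (fun x => Real.exp (t * F x) * G x) volume (b - δ) b := by
    intro t
    exact ((hcontI t).mono (Set.Icc_subset_Icc (by linarith) (le_refl b))).intervalIntegrable_of_Icc hδb
  -- Step 4 : tail bound
  obtain ⟨K, hK⟩ := IsCompact.exists_bound_of_continuousOn isCompact_Icc hG
  have hK0 : 0 ≤ K := le_trans (norm_nonneg _) (hK b hbmem)
  obtain ⟨x₀, hx₀mem, hx₀max⟩ :=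
    isCompact_Icc.exists_isMaxOn (Set.nonempty_Icc.mpr haδ) (hF.mono (Set.Icc_subset_Icc (le_refl a) (by linarith)))
  set m : ℝ := -F x₀ with hmdef
  have hm : 0 < m := by
    have := hFneg x₀ ⟨hx₀mem.1, by have := hx₀mem.2; linarith [hδ0]⟩
    simp only [hmdef]; linarith
  have hTail : ∀ t : ℝ, 0 ≤ t →
      |t * ∫ x in a..(b - δ), Real.exp (t * F x) * G x| ≤ K * (b - a) * (t * Real.exp (-(t * m))) := by
    intro t ht
    have hbnd : ∀ x ∈ Set.uIoc a (b - δ), ‖Real.exp (t * F x) * G x‖ ≤ Real.exp (-(t * m)) * K := by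
      intro x hx
      rw [Set.uIoc_of_le haδ] at hx
      have hxmem : x ∈ Set.Icc a b := ⟨hx.1.le, by linarith [hx.2]⟩
      have hFle : F x ≤ -m := by
        have hle : F x ≤ F x₀ := hx₀max ⟨hx.1.le, hx.2⟩
        simp only [hmdef]; linarith
      have h1 : Real.exp (t * F x) ≤ Real.exp (-(t * m)) := by
        apply Real.exp_le_exp.2
        nlinarith
      rw [norm_mul, Real.norm_eq_abs, Real.norm_eq_abs, Real.abs_exp]
      exact mul_le_mul h1 (by simpa using hK x hxmem) (abs_nonneg _) (Real.exp_pos _).le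
    have h2 := intervalIntegral.norm_integral_le_of_norm_le_const hbnd
    rw [abs_mul, abs_of_nonneg ht]
    calc t * |∫ x in a..(b - δ), Real.exp (t * F x) * G x|
        ≤ t * (Real.exp (-(t * m)) * K * |b - δ - a|) := by
          apply mul_le_mul_of_nonneg_left _ ht
          simpa [Real.norm_eq_abs] using h2
      _ ≤ K * (b - a) * (t * Real.exp (-(t * m))) := by
          rw [abs_of_nonneg (by linarith : (0:ℝ) ≤ b - δ - a)]
          nlinarith [mul_nonneg (mul_nonneg (mul_nonneg hK0 ht) (Real.exp_pos (-(t * m))).le) hδ0.le]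
  have htail0 : Tendsto (fun t : ℝ => K * (b - a) * (t * Real.exp (-(t * m)))) atTop (nhds 0) := by
    have h0 := Real.tendsto_pow_mul_exp_neg_atTop_nhds_zero 1
    have hcomp : Tendsto (fun t : ℝ => (t * m) ^ 1 * Real.exp (-(t * m))) atTop (nhds 0) :=
      h0.comp (Tendsto.atTop_mul_const hm tendsto_id)
    have h3 : Tendsto (fun t : ℝ => K * (b - a) / m * ((t * m) ^ 1 * Real.exp (-(t * m)))) atTop
        (nhds (K * (b - a) / m * 0)) := hcomp.const_mul _
    rw [mul_zero] at h3
    apply h3.congr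
    intro t
    field_simp
  -- Step 5: main interval bounds
  have hMε : (0:ℝ) < M - ε := by linarith
  have hLε : (0:ℝ) < L - ε := by linarith
  have hLε' : (0:ℝ) < L + ε := by linarith
  have hBup : ∀ t : ℝ, 0 < t →
      t * ∫ x in (b - δ)..b, Real.exp (t * F x) * G x ≤ (M + ε) / (L - ε) := by
    intro t ht
    have hc : (0:ℝ) < t * (L - ε) := mul_pos ht hLε
    have hmono : (∫ x in (b - δ)..b, Real.exp (t * F x) * G x)
        ≤ ∫ x in (b - δ)..b, Real.exp (t * (L - ε) * (x - b)) * (M + ε) := by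
      apply intervalIntegral.integral_mono_on hδb (hint2 t)
      · exact ((Real.continuous_exp.comp (continuous_const.mul
          (continuous_id.sub continuous_const))).mul continuous_const).intervalIntegrable _ _
      · intro x hx
        obtain ⟨hf1, hf2⟩ := hFbound x hx
        obtain ⟨hg1, hg2⟩ := hGbound x hx
        have h1 : Real.exp (t * F x) ≤ Real.exp (t * (L - ε) * (x - b)) := by
          apply Real.exp_le_exp.2
          nlinarith
        have h2 : (0:ℝ) < G x := by linarith
        exact mul_le_mul h1 hg2 h2.le (Real.exp_pos _).le
    have hval : (∫ x in (b - δ)..b, Real.exp (t * (L - ε) * (x - b)) * (M + ε))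
        = (1 - Real.exp (-(t * (L - ε) * δ))) / (t * (L - ε)) * (M + ε) := by
      rw [intervalIntegral.integral_mul_const, integral_exp_aux b δ _ hc.ne']
    rw [hval] at hmono
    have h3 := mul_le_mul_of_nonneg_left hmono ht.le
    apply le_trans h3
    have hE : (0:ℝ) ≤ Real.exp (-(t * (L - ε) * δ)) := (Real.exp_pos _).le
    rw [show t * ((1 - Real.exp (-(t * (L - ε) * δ))) / (t * (L - ε)) * (M + ε))
      = (1 - Real.exp (-(t * (L - ε) * δ))) * (M + ε) / (L - ε) by field_simp,
      div_le_div_iff_of_pos_right hLε]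
    nlinarith [mul_nonneg hE (by linarith : (0:ℝ) ≤ M + ε)]
  have hBlo : ∀ t : ℝ, 0 < t →
      (1 - Real.exp (-(t * (L + ε) * δ))) * (M - ε) / (L + ε)
        ≤ t * ∫ x in (b - δ)..b, Real.exp (t * F x) * G x := by
    intro t ht
    have hc : (0:ℝ) < t * (L + ε) := mul_pos ht hLε'
    have hmono : (∫ x in (b - δ)..b, Real.exp (t * (L + ε) * (x - b)) * (M - ε))
        ≤ ∫ x in (b - δ)..b, Real.exp (t * F x) * G x := by
      apply intervalIntegral.integral_mono_on hδb
        (((Real.continuous_exp.comp (continuous_const.mul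
          (continuous_id.sub continuous_const))).mul continuous_const).intervalIntegrable _ _)
        (hint2 t)
      intro x hx
      obtain ⟨hf1, hf2⟩ := hFbound x hx
      obtain ⟨hg1, hg2⟩ := hGbound x hx
      have h1 : Real.exp (t * (L + ε) * (x - b)) ≤ Real.exp (t * F x) := by
        apply Real.exp_le_exp.2
        nlinarith
      exact mul_le_mul h1 hg1 hMε.le (Real.exp_pos _).le
    have hval : (∫ x in (b - δ)..b, Real.exp (t * (L + ε) * (x - b)) * (M - ε))
        = (1 - Real.exp (-(t * (L + ε) * δ))) / (t * (L + ε)) * (M - ε) := by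
      rw [intervalIntegral.integral_mul_const, integral_exp_aux b δ _ hc.ne']
    rw [hval] at hmono
    have h3 := mul_le_mul_of_nonneg_left hmono ht.le
    refine le_trans (le_of_eq ?_) h3
    field_simp
  -- Step 6: eventual smallness
  set η : ℝ := ε' / 4 * (L + ε) / (M - ε) with hηdef
  have hη : 0 < η := by positivity
  have hE2tend : Tendsto (fun t : ℝ => Real.exp (-(t * (L + ε) * δ))) atTop (nhds 0) := by
    have h1 : Tendsto (fun t : ℝ => t * ((L + ε) * δ)) atTop atTop :=
      Tendsto.atTop_mul_const (mul_pos hLε' hδ0) tendsto_id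
    have h2 := Real.tendsto_exp_atBot.comp (tendsto_neg_atTop_atBot.comp h1)
    apply h2.congr
    intro t
    simp only [Function.comp_apply]
    ring_nf
  have hsmall2 : ∀ᶠ t : ℝ in atTop, Real.exp (-(t * (L + ε) * δ)) < η :=
    hE2tend.eventually_lt_const hη
  have htails : ∀ᶠ t : ℝ in atTop, K * (b - a) * (t * Real.exp (-(t * m))) < ε' / 4 :=
    htail0.eventually_lt_const (by linarith)
  -- Step 7: assemble
  have hsplit : ∀ t : ℝ, (∫ x in a..b, Real.exp (t * F x) * G x)
      = (∫ x in a..(b - δ), Real.exp (t * F x) * G x)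
        + ∫ x in (b - δ)..b, Real.exp (t * F x) * G x :=
    fun t => (intervalIntegral.integral_add_adjacent_intervals (hint1 t) (hint2 t)).symm
  filter_upwards [eventually_ge_atTop (1:ℝ), htails, hsmall2] with t ht1 ht2 ht3
  have ht0 : (0:ℝ) < t := lt_of_lt_of_le one_pos ht1
  have hTlt : |t * ∫ x in a..(b - δ), Real.exp (t * F x) * G x| < ε' / 4 :=
    lt_of_le_of_lt (hTail t ht0.le) ht2
  obtain ⟨hT1, hT2⟩ := abs_lt.mp hTlt
  have hup := hBup t ht0
  have hlo := hBlo t ht0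
  have hE₂0 : (0:ℝ) ≤ Real.exp (-(t * (L + ε) * δ)) := (Real.exp_pos _).le
  have hkey_lo : (M - ε) / (L + ε) - ε' / 4
      ≤ (1 - Real.exp (-(t * (L + ε) * δ))) * (M - ε) / (L + ε) := by
    have h5 : Real.exp (-(t * (L + ε) * δ)) * (M - ε) / (L + ε) ≤ ε' / 4 := by
      rw [div_le_iff₀ hLε']
      have : Real.exp (-(t * (L + ε) * δ)) * (M - ε) ≤ η * (M - ε) :=
        mul_le_mul_of_nonneg_right ht3.le hMε.le
      apply le_trans this
      rw [hηdef]
      rw [div_mul_cancel₀ _ hMε.ne']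
    have h6 : (1 - Real.exp (-(t * (L + ε) * δ))) * (M - ε) / (L + ε)
        = (M - ε) / (L + ε) - Real.exp (-(t * (L + ε) * δ)) * (M - ε) / (L + ε) := by
      ring
    linarith
  rw [Real.dist_eq, hsplit t, mul_add, abs_lt]
  constructor <;> linarith

lemma laplace_core' (a b L M : ℝ) (hab : a < b) (F G : ℝ → ℝ)
    (hF : ContinuousOn F (Set.Icc a b)) (hG : ContinuousOn G (Set.Icc a b))
    (hFb : F b = 0) (hFneg : ∀ x ∈ Set.Ico a b, F x < 0)
    (hL : 0 < L) (hM : M ≠ 0) (hGb : G b = M)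
    (hFd : Tendsto (fun x => F x / (x - b)) (nhdsWithin b (Set.Ico a b)) (nhds L)) :
    Tendsto (fun t => t * ∫ x in a..b, Real.exp (t * F x) * G x) atTop (nhds (M / L)) := by
  rcases hM.lt_or_gt with hMneg | hMpos
  · have hcore := laplace_core_s8 a b L (-M) hab F (fun x => -G x)
      hF hG.neg hFb hFneg hL (by linarith) (by simp [hGb]) hFd
    have h2 : Tendsto (fun t => -(t * ∫ x in a..b, Real.exp (t * F x) * -G x)) atTop
        (nhds (-(-M / L))) := hcore.neg
    rw [neg_div, neg_neg] at h2
    apply h2.congr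
    intro t
    have : (∫ x in a..b, Real.exp (t * F x) * -G x)
        = -∫ x in a..b, Real.exp (t * F x) * G x := by
      rw [← intervalIntegral.integral_neg]
      apply intervalIntegral.integral_congr
      intro x _
      ring
    rw [this]; ring
  · exact laplace_core_s8 a b L M hab F G hF hG hFb hFneg hL hMpos hGb hFd

lemma laplace_endpoint_b (a b L₀ : ℝ) (hab : a < b) (h g : ℝ → ℝ)
    (hhc : ContinuousOn h (Set.Icc a b)) (hgcont : ContinuousOn g (Set.Icc a b))
    (hmax : ∀ x ∈ Set.Icc a b, x ≠ b → h x < h b)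
    (hh1 : L₀ ≠ 0) (hgc : g b ≠ 0)
    (hslope : Tendsto (slope h b) (nhdsWithin b (Set.Icc a b \ {b})) (nhds L₀)) :
    Tendsto (fun t => t * ∫ x in a..b, Real.exp (t * (h x - h b)) * g x)
      atTop (nhds (g b / |L₀|)) := by
  have habs : (0:ℝ) < |L₀| := abs_pos.mpr hh1
  have hneB : (nhdsWithin b (Set.Ico a b)).NeBot := by
    rw [← mem_closure_iff_nhdsWithin_neBot, closure_Ico hab.ne]
    exact ⟨hab.le, le_refl b⟩
  have hslope_b : Tendsto (fun y => (h y - h b) / (y - b))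
      (nhdsWithin b (Set.Ico a b)) (nhds L₀) := by
    have hsub : Set.Ico a b ⊆ Set.Icc a b \ {b} := by
      intro y hy
      exact ⟨⟨hy.1, hy.2.le⟩, by simp [hy.2.ne]⟩
    have hmono := hslope.mono_left (nhdsWithin_mono b hsub)
    apply hmono.congr'
    filter_upwards [self_mem_nhdsWithin] with y _
    rw [slope_def_field]
  have hL₀pos : 0 < L₀ := by
    rcases lt_or_ge 0 L₀ with h' | h'
    · exact h'
    · exfalso
      apply hh1
      have hge : 0 ≤ L₀ := by
        apply ge_of_tendsto hslope_b
        filter_upwards [self_mem_nhdsWithin] with y hy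
        have h1 : h y - h b < 0 := by
          have := hmax y ⟨hy.1, hy.2.le⟩ hy.2.ne
          linarith
        have h2 : y - b < 0 := by linarith [hy.2]
        exact le_of_lt (div_pos_of_neg_of_neg h1 h2)
      linarith
  have habs' : |L₀| = L₀ := abs_of_pos hL₀pos
  apply laplace_core' a b (|L₀|) (g b) hab (fun x => h x - h b) g
    (hhc.sub continuousOn_const) hgcont (by simp) (by
      intro x hx
      have := hmax x ⟨hx.1, hx.2.le⟩ hx.2.ne
      show h x - h b < 0
      linarith)
    habs hgc rfl (by rw [habs']; exact hslope_b)

lemma laplace_endpoint_a (a b L₀ : ℝ) (hab : a < b) (h g : ℝ → ℝ)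
    (hhc : ContinuousOn h (Set.Icc a b)) (hgcont : ContinuousOn g (Set.Icc a b))
    (hmax : ∀ x ∈ Set.Icc a b, x ≠ a → h x < h a)
    (hh1 : L₀ ≠ 0) (hgc : g a ≠ 0)
    (hslope : Tendsto (slope h a) (nhdsWithin a (Set.Icc a b \ {a})) (nhds L₀)) :
    Tendsto (fun t => t * ∫ x in a..b, Real.exp (t * (h x - h a)) * g x)
      atTop (nhds (g a / |L₀|)) := by
  have habs : (0:ℝ) < |L₀| := abs_pos.mpr hh1
  have hslope_a : Tendsto (fun y => (h y - h a) / (y - a))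
      (nhdsWithin a (Set.Ioc a b)) (nhds L₀) := by
    have hsub : Set.Ioc a b ⊆ Set.Icc a b \ {a} := by
      intro y hy
      exact ⟨⟨hy.1.le, hy.2⟩, by simp [hy.1.ne']⟩
    have hmono := hslope.mono_left (nhdsWithin_mono a hsub)
    apply hmono.congr'
    filter_upwards [self_mem_nhdsWithin] with y _
    rw [slope_def_field]
  have hneA : (nhdsWithin a (Set.Ioc a b)).NeBot := by
    rw [← mem_closure_iff_nhdsWithin_neBot, closure_Ioc hab.ne]
    exact ⟨le_refl a, hab.le⟩
  have hL₀neg : L₀ < 0 := by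
    rcases lt_or_ge L₀ 0 with h' | h'
    · exact h'
    · exfalso
      apply hh1
      have hle : L₀ ≤ 0 := by
        apply le_of_tendsto hslope_a
        filter_upwards [self_mem_nhdsWithin] with y hy
        have h1 : h y - h a < 0 := by
          have := hmax y ⟨hy.1.le, hy.2⟩ hy.1.ne'
          linarith
        have h2 : (0:ℝ) < y - a := by linarith [hy.1]
        exact le_of_lt (div_neg_of_neg_of_pos h1 h2)
      linarith
  have habs' : |L₀| = -L₀ := abs_of_neg hL₀neg
  have hmap : Tendsto (fun x => a + b - x) (nhdsWithin b (Set.Ico a b))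
      (nhdsWithin a (Set.Ioc a b)) := by
    rw [tendsto_nhdsWithin_iff]
    constructor
    · have hcont : Tendsto (fun x : ℝ => a + b - x) (nhdsWithin b (Set.Ico a b))
          (nhds (a + b - b)) :=
        (Continuous.tendsto (by fun_prop) b).mono_left nhdsWithin_le_nhds
      simpa using hcont
    · filter_upwards [self_mem_nhdsWithin] with x hx
      simp only [Set.mem_Ico] at hx
      exact ⟨by linarith [hx.2], by linarith [hx.1]⟩
  have hFd : Tendsto (fun x => (h (a + b - x) - h a) / (x - b))
      (nhdsWithin b (Set.Ico a b)) (nhds (|L₀|)) := by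
    rw [habs']
    have := (hslope_a.comp hmap).neg
    apply this.congr
    intro x
    simp only [Function.comp_apply]
    rw [show a + b - x - a = -(x - b) by ring, div_neg, neg_neg]
  have hrefl : Set.MapsTo (fun x => a + b - x) (Set.Icc a b) (Set.Icc a b) := by
    intro x hx
    simp only [Set.mem_Icc] at hx ⊢
    exact ⟨by linarith [hx.2], by linarith [hx.1]⟩
  have hcore' := laplace_core' a b (|L₀|) (g a) hab
    (fun x => h (a + b - x) - h a) (fun x => g (a + b - x))
    ((hhc.comp ((continuous_const.sub continuous_id).continuousOn) hrefl).sub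
      continuousOn_const)
    (hgcont.comp ((continuous_const.sub continuous_id).continuousOn) hrefl)
    (by simp) (by
      intro x hx
      simp only [Set.mem_Ico] at hx
      have hy : a + b - x ∈ Set.Icc a b := ⟨by linarith [hx.2], by linarith [hx.1]⟩
      have hyne : a + b - x ≠ a := by
        intro hq
        have : x = b := by linarith
        linarith [hx.2]
      have := hmax _ hy hyne
      show h (a + b - x) - h a < 0
      linarith)
    habs hgc (by simp) hFd
  have heq : ∀ t : ℝ, (∫ x in a..b, Real.exp (t * (h (a + b - x) - h a)) * g (a + b - x))
      = ∫ x in a..b, Real.exp (t * (h x - h a)) * g x := by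
    intro t
    have := intervalIntegral.integral_comp_sub_left
      (fun y => Real.exp (t * (h y - h a)) * g y) (a + b) (a := a) (b := b)
    simpa using this
  apply hcore'.congr
  intro t
  rw [heq t]

/-- Classical Laplace's method, endpoint maximum with `h'(c) ≠ 0`:
`∫ e^{th} g ∼ (g(c)/|h'(c)|) e^{th(c)} / t` as `t → ∞`. -/
theorem laplace_endpoint_noncritical_classical
    (a b c : ℝ) (hab : a < b) (hc : c = a ∨ c = b)
    (h g : ℝ → ℝ)
    (hh : ContDiffOn ℝ 3 h (Set.Icc a b))
    (hmax : ∀ x ∈ Set.Icc a b, x ≠ c → h x < h c)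
    (hh1 : derivWithin h (Set.Icc a b) c ≠ 0)
    (hh2 : iteratedDerivWithin 2 h (Set.Icc a b) c ≠ 0)
    (hg : ContDiffOn ℝ 1 g (Set.Icc a b))
    (hgc : g c ≠ 0) :
    Filter.Tendsto
      (fun t : ℝ => (∫ x in a..b, Real.exp (t * h x) * g x) /
        (g c / |derivWithin h (Set.Icc a b) c| * (Real.exp (t * h c) / t)))
      Filter.atTop (nhds 1) := by
  have hcmem : c ∈ Set.Icc a b := by
    rcases hc with rfl | rfl <;> simp [le_of_lt hab]
  have hhc : ContinuousOn h (Set.Icc a b) := hh.continuousOn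
  have hgcont : ContinuousOn g (Set.Icc a b) := hg.continuousOn
  have hdiff : DifferentiableOn ℝ h (Set.Icc a b) := hh.differentiableOn (by norm_num)
  have hder : HasDerivWithinAt h (derivWithin h (Set.Icc a b) c) (Set.Icc a b) c :=
    (hdiff c hcmem).hasDerivWithinAt
  have hslope : Tendsto (slope h c) (nhdsWithin c (Set.Icc a b \ {c}))
      (nhds (derivWithin h (Set.Icc a b) c)) :=
    hasDerivWithinAt_iff_tendsto_slope.mp hder
  have habs : (0:ℝ) < |derivWithin h (Set.Icc a b) c| := abs_pos.mpr hh1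
  have hcore : Tendsto (fun t => t * ∫ x in a..b, Real.exp (t * (h x - h c)) * g x)
      atTop (nhds (g c / |derivWithin h (Set.Icc a b) c|)) := by
    rcases hc with hca | hcb
    · rw [hca] at hmax hgc hslope hh1 ⊢
      exact laplace_endpoint_a a b _ hab h g hhc hgcont hmax hh1 hgc hslope
    · rw [hcb] at hmax hgc hslope hh1 ⊢
      exact laplace_endpoint_b a b _ hab h g hhc hgcont hmax hh1 hgc hslope
  -- final assembly
  have hfinal : Tendsto (fun t => (t * ∫ x in a..b, Real.exp (t * (h x - h c)) * g x)
      * (|derivWithin h (Set.Icc a b) c| / g c)) atTop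
      (nhds ((g c / |derivWithin h (Set.Icc a b) c|)
        * (|derivWithin h (Set.Icc a b) c| / g c))) := hcore.mul_const _
  rw [show g c / |derivWithin h (Set.Icc a b) c|
      * (|derivWithin h (Set.Icc a b) c| / g c) = 1 by field_simp] at hfinal
  apply hfinal.congr'
  filter_upwards [eventually_gt_atTop (0:ℝ)] with t ht
  have hexp : Real.exp (t * h c) ≠ 0 := (Real.exp_pos _).ne'
  have hI : (∫ x in a..b, Real.exp (t * h x) * g x)
      = Real.exp (t * h c) * ∫ x in a..b, Real.exp (t * (h x - h c)) * g x := by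
    rw [← intervalIntegral.integral_const_mul]
    apply intervalIntegral.integral_congr
    intro x _
    simp only
    rw [← mul_assoc, ← Real.exp_add, show t * h c + t * (h x - h c) = t * h x by ring]
  rw [hI]
  field_simp
end
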